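/- arXiv:1611.02994 — 9 statements merged into one kernel-verified Lean document; each statement's English description precedes it below -/
import Mathlib

section
/- Let X be a completely regular Hausdorff space and let 𝒯 be a directed family of functionally bounded subsets of X containing all finite subsets. If K ⊆ C(X,ℝ) is compact in the set-open topology τ_𝒯 and the evaluation map X × K → ℝ, (x,f) ↦ f(x), is jointly continuous (K carrying the subspace topology induced by τ_𝒯), then K is equicontinuous. -/
open Set Topology

/-- A subset `A` of a topological space `Y` is functionally bounded if every continuous
real-valued function on `Y` is bounded on `A`. -/
def FunctionallyBounded {Y : Type*} [TopologicalSpace Y] (A : Set Y) : Prop :=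
  ∀ f : C(Y, ℝ), Bornology.IsBounded (f '' A)

/-- The set-open topology on `C(X, ℝ)` generated by a family `𝒯` of subsets of `X`. -/
def setOpenTopology (X : Type*) [TopologicalSpace X] (𝒯 : Set (Set X)) :
    TopologicalSpace C(X, ℝ) :=
  TopologicalSpace.generateFrom
    {S | ∃ A ∈ 𝒯, ∃ U : Set ℝ, IsOpen U ∧ S = {f : C(X, ℝ) | Set.MapsTo (⇑f) A U}}


lemma aux_equicont {X ι : Type*} [TopologicalSpace X] [TopologicalSpace ι] [CompactSpace ι]
    (F : ι → X → ℝ) (hev : Continuous fun p : X × ι => F p.2 p.1) :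
    Equicontinuous F := by
  intro x₀
  rw [Metric.equicontinuousAt_iff_right]
  intro ε hε
  -- for each i, an open box
  have h : ∀ i : ι, ∃ U : Set X, ∃ V : Set ι, IsOpen U ∧ IsOpen V ∧ x₀ ∈ U ∧ i ∈ V ∧
      ∀ x ∈ U, ∀ j ∈ V, dist (F j x) (F i x₀) < ε / 2 := by
    intro i
    have hW : IsOpen {p : X × ι | dist (F p.2 p.1) (F i x₀) < ε / 2} := by
      have : Continuous fun p : X × ι => dist (F p.2 p.1) (F i x₀) :=
        hev.dist continuous_const
      exact isOpen_lt this continuous_const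
    have hmem : (x₀, i) ∈ {p : X × ι | dist (F p.2 p.1) (F i x₀) < ε / 2} := by
      simp [dist_self, half_pos hε]
    rcases isOpen_prod_iff.mp hW x₀ i hmem with ⟨U, V, hU, hV, hxU, hiV, hsub⟩
    exact ⟨U, V, hU, hV, hxU, hiV, fun x hx j hj => hsub (mk_mem_prod hx hj)⟩
  choose U V hUo hVo hxU hiV hkey using h
  obtain ⟨s, hs⟩ := IsCompact.elim_finite_subcover isCompact_univ V hVo
    (fun i _ => mem_iUnion.mpr ⟨i, hiV i⟩)
  have hUnhds : (⋂ i ∈ s, U i) ∈ 𝓝 x₀ := by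
    exact (Filter.biInter_finset_mem s).mpr fun i _ => (hUo i).mem_nhds (hxU i)
  filter_upwards [hUnhds] with x hx j
  obtain ⟨i, hi, hjV⟩ : ∃ i ∈ s, j ∈ V i := by
    have := hs (mem_univ j); simpa using this
  have hxUi : x ∈ U i := by
    have := mem_iInter₂.mp hx i hi; exact this
  have h1 := hkey i x hxUi j hjV
  have h2 := hkey i x₀ (hxU i) j hjV
  calc dist (F j x₀) (F j x) ≤ dist (F j x₀) (F i x₀) + dist (F i x₀) (F j x) := dist_triangle _ _ _
    _ < ε / 2 + ε / 2 := by rw [dist_comm (F i x₀)]; exact add_lt_add h2 h1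
    _ = ε := add_halves ε

/-- If `K ⊆ C(X,ℝ)` is `τ_𝒯`-compact and the evaluation map `X × K → ℝ` is jointly continuous
(`K` carrying the subspace topology induced by `τ_𝒯`), then `K` is equicontinuous. -/
theorem statement1 {X : Type*} [TopologicalSpace X] [CompletelyRegularSpace X] [T2Space X]
    (𝒯 : Set (Set X))
    (h_fb : ∀ A ∈ 𝒯, FunctionallyBounded A)
    (h_dir : ∀ A ∈ 𝒯, ∀ B ∈ 𝒯, ∃ C ∈ 𝒯, A ∪ B ⊆ C)
    (h_fin : ∀ A : Set X, A.Finite → A ∈ 𝒯)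
    (K : Set C(X, ℝ))
    (hKcomp : @IsCompact C(X, ℝ) (setOpenTopology X 𝒯) K)
    (hev : @Continuous (X × K) ℝ
      (@instTopologicalSpaceProd X K _
        (TopologicalSpace.induced (Subtype.val : K → C(X, ℝ)) (setOpenTopology X 𝒯))) _
      (fun p => (p.2 : C(X, ℝ)) p.1)) :
    Equicontinuous fun f : K => ((f : C(X, ℝ)) : X → ℝ) := by
  letI : TopologicalSpace C(X, ℝ) := setOpenTopology X 𝒯
  haveI : CompactSpace K := isCompact_iff_compactSpace.mp hKcomp
  exact aux_equicont _ hev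
end

section
/- Let X be a completely regular Hausdorff space and let K be a compact subset of C(X,ℝ) equipped with the compact-open topology. Then the following are equivalent: (a) K is equicontinuous; (b) the evaluation map X × K → ℝ, (x,f) ↦ f(x), is jointly continuous when K carries the subspace topology of pointwise convergence; (c) the evaluation map X × K → ℝ is jointly continuous when K carries the subspace topology induced by the compact-open topology. -/
open Set Topology Filter

/-- (a) → (b): an equicontinuous family is jointly continuous for the topology of pointwise
convergence on the index. -/
theorem aux_equicont_to_pw {X : Type*} [TopologicalSpace X] {ι : Type*} (F : ι → X → ℝ)
    (h : Equicontinuous F) :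
    @Continuous (X × ι) ℝ
      (@instTopologicalSpaceProd X ι _ (TopologicalSpace.induced F Pi.topologicalSpace)) _
      (fun p => F p.2 p.1) := by
  letI : TopologicalSpace ι := TopologicalSpace.induced F Pi.topologicalSpace
  rw [continuous_iff_continuousAt]
  rintro ⟨x₀, i₀⟩
  rw [ContinuousAt, Metric.tendsto_nhds]
  intro ε hε
  rw [nhds_prod_eq]
  have h1 : ∀ᶠ x in nhds x₀, ∀ i, dist (F i x₀) (F i x) < ε / 2 :=
    Metric.equicontinuousAt_iff_right.mp (h x₀) (ε / 2) (by positivity)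
  have hcont : Continuous fun i : ι => F i x₀ :=
    (continuous_apply x₀).comp continuous_induced_dom
  have h2 : ∀ᶠ i in nhds i₀, dist (F i x₀) (F i₀ x₀) < ε / 2 :=
    Metric.tendsto_nhds.mp (hcont.tendsto i₀) (ε / 2) (by positivity)
  filter_upwards [Filter.prod_mem_prod h1 h2]
  rintro ⟨x, i⟩ ⟨hx, hi⟩
  calc dist (F i x) (F i₀ x₀) ≤ dist (F i x) (F i x₀) + dist (F i x₀) (F i₀ x₀) :=
        dist_triangle _ _ _
    _ < ε / 2 + ε / 2 := add_lt_add (by rw [dist_comm]; exact hx i) hi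
    _ = ε := add_halves ε

/-- (b) → (c): compact-open is finer than pointwise. -/
theorem aux_pw_to_co {X : Type*} [TopologicalSpace X] (K : Set C(X, ℝ))
    (h : @Continuous (X × K) ℝ
        (@instTopologicalSpaceProd X K _
          (TopologicalSpace.induced (fun f : K => ((f : C(X, ℝ)) : X → ℝ)) Pi.topologicalSpace))
        _ (fun p => (p.2 : C(X, ℝ)) p.1)) :
    Continuous fun p : X × K => (p.2 : C(X, ℝ)) p.1 := by
  have hle : (instTopologicalSpaceSubtype : TopologicalSpace K) ≤
      TopologicalSpace.induced (fun f : K => ((f : C(X, ℝ)) : X → ℝ)) Pi.topologicalSpace :=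
    continuous_iff_le_induced.mp (continuous_coeFun.comp continuous_subtype_val)
  have hle2 : (instTopologicalSpaceProd : TopologicalSpace (X × K)) ≤
      @instTopologicalSpaceProd X K _
        (TopologicalSpace.induced (fun f : K => ((f : C(X, ℝ)) : X → ℝ)) Pi.topologicalSpace) :=
    inf_le_inf le_rfl (induced_mono hle)
  exact continuous_le_dom hle2 h

/-- (c) → (a): if `K` is compact and evaluation is jointly continuous, `K` is equicontinuous. -/
theorem aux_co_to_equicont {X : Type*} [TopologicalSpace X] (K : Set C(X, ℝ))
    (hK : IsCompact K) (h : Continuous fun p : X × K => (p.2 : C(X, ℝ)) p.1) :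
    Equicontinuous fun f : K => ((f : C(X, ℝ)) : X → ℝ) := by
  intro x₀
  rw [Metric.equicontinuousAt_iff_right]
  intro ε hε
  have key : ∀ f : K, ∃ U ∈ nhds x₀, ∃ V ∈ nhds f, ∀ x ∈ U, ∀ g ∈ V,
      dist ((g : C(X, ℝ)) x) ((f : C(X, ℝ)) x₀) < ε / 2 := by
    intro f
    have hc := h.continuousAt (x := (x₀, f))
    rw [ContinuousAt, Metric.tendsto_nhds] at hc
    have h2 := hc (ε / 2) (by positivity)
    rw [nhds_prod_eq] at h2
    rcases Filter.mem_prod_iff.mp h2 with ⟨U, hU, V, hV, hUV⟩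
    exact ⟨U, hU, V, hV, fun x hx g hg => hUV (Set.mk_mem_prod hx hg)⟩
  choose U hU V hV hP using key
  haveI : CompactSpace K := isCompact_iff_compactSpace.mp hK
  obtain ⟨s, hs⟩ := isCompact_univ.elim_nhds_subcover V (fun f _ => hV f)
  have hUs : (⋂ f ∈ s, U f) ∈ nhds x₀ := (Filter.biInter_mem s.finite_toSet).mpr fun f _ => hU f
  filter_upwards [hUs] with x hx g
  have hg : g ∈ ⋃ f ∈ s, V f := hs.2 (mem_univ g)
  simp only [Set.mem_iUnion] at hg
  obtain ⟨f, hfs, hgV⟩ := hg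
  have hx' : x ∈ U f := by
    simp only [Set.mem_iInter] at hx
    exact hx f hfs
  have hx₀' : x₀ ∈ U f := mem_of_mem_nhds (hU f)
  calc dist ((g : C(X, ℝ)) x₀) ((g : C(X, ℝ)) x)
      ≤ dist ((g : C(X, ℝ)) x₀) ((f : C(X, ℝ)) x₀)
        + dist ((f : C(X, ℝ)) x₀) ((g : C(X, ℝ)) x) := dist_triangle _ _ _
    _ < ε / 2 + ε / 2 :=
        add_lt_add (hP f x₀ hx₀' g hgV) (by rw [dist_comm]; exact hP f x hx' g hgV)
    _ = ε := add_halves ε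

/-- For a compact subset `K` of `C(X,ℝ)` with the compact-open topology, the following are
equivalent: (a) `K` is equicontinuous; (b) the evaluation map `X × K → ℝ` is jointly continuous
when `K` carries the subspace topology of pointwise convergence; (c) the evaluation map is
jointly continuous when `K` carries the subspace topology induced by the compact-open topology. -/
theorem statement2 {X : Type*} [TopologicalSpace X] [CompletelyRegularSpace X] [T2Space X]
    (K : Set C(X, ℝ)) (hK : IsCompact K) :
    ((Equicontinuous fun f : K => ((f : C(X, ℝ)) : X → ℝ)) ↔
      @Continuous (X × K) ℝ
        (@instTopologicalSpaceProd X K _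
          (TopologicalSpace.induced (fun f : K => ((f : C(X, ℝ)) : X → ℝ)) Pi.topologicalSpace))
        _ (fun p => (p.2 : C(X, ℝ)) p.1)) ∧
    ((Equicontinuous fun f : K => ((f : C(X, ℝ)) : X → ℝ)) ↔
      Continuous fun p : X × K => (p.2 : C(X, ℝ)) p.1) := by
  refine ⟨⟨fun ha => aux_equicont_to_pw _ ha,
      fun hb => aux_co_to_equicont K hK (aux_pw_to_co K hb)⟩,
    ⟨fun ha => aux_pw_to_co K (aux_equicont_to_pw _ ha), aux_co_to_equicont K hK⟩⟩
end

section
/- Let X be a completely regular Hausdorff space and let 𝒯 be a directed family of functionally bounded subsets of X containing all finite subsets. Denote by C_𝒯(X) the space C(X,ℝ) equipped with the set-open topology τ_𝒯. Then the canonical map δ : X → C(C_𝒯(X),ℝ), δ(x)(f) := f(x), where C(C_𝒯(X),ℝ) carries the compact-open topology, is well defined (each δ(x) is continuous on C_𝒯(X)) and is continuous if and only if every τ_𝒯-compact subset of C(X,ℝ) is equicontinuous. -/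
open Set Topology

/-- `C_𝒯(X)`: the space `C(X,ℝ)` equipped with the set-open topology `τ_𝒯`. -/
def CT (X : Type*) [TopologicalSpace X] (𝒯 : Set (Set X)) : Type _ := C(X, ℝ)

instance (X : Type*) [TopologicalSpace X] (𝒯 : Set (Set X)) : TopologicalSpace (CT X 𝒯) :=
  setOpenTopology X 𝒯

/-- The underlying continuous map of an element of `CT X 𝒯`. -/
def CT.toCM {X : Type*} [TopologicalSpace X] {𝒯 : Set (Set X)} (f : CT X 𝒯) : C(X, ℝ) := f

/-- The canonical map `δ : X → C(C_𝒯(X), ℝ)`, `δ(x)(f) = f(x)` (target with the compact-open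
topology), is well defined, and it is continuous if and only if every `τ_𝒯`-compact subset of
`C(X,ℝ)` is equicontinuous. -/
theorem statement3 {X : Type*} [TopologicalSpace X] [CompletelyRegularSpace X] [T2Space X]
    (𝒯 : Set (Set X))
    (h_fb : ∀ A ∈ 𝒯, FunctionallyBounded A)
    (h_dir : ∀ A ∈ 𝒯, ∀ B ∈ 𝒯, ∃ C ∈ 𝒯, A ∪ B ⊆ C)
    (h_fin : ∀ A : Set X, A.Finite → A ∈ 𝒯) :
    (∀ x : X, Continuous fun f : CT X 𝒯 => f.toCM x) ∧
    (∀ h : ∀ x : X, Continuous fun f : CT X 𝒯 => f.toCM x,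
      (Continuous fun x : X => (⟨fun f : CT X 𝒯 => f.toCM x, h x⟩ : C(CT X 𝒯, ℝ))) ↔
        ∀ K : Set (CT X 𝒯), IsCompact K →
          Equicontinuous fun f : K => (((f : CT X 𝒯).toCM : C(X, ℝ)) : X → ℝ)) := by
  have hev : ∀ x : X, Continuous fun f : CT X 𝒯 => f.toCM x := by
    intro x
    rw [continuous_def]
    intro U hU
    have hmem : (fun f : CT X 𝒯 => f.toCM x) ⁻¹' U ∈
        {S | ∃ A ∈ 𝒯, ∃ V : Set ℝ, IsOpen V ∧ S = {f : C(X, ℝ) | Set.MapsTo (⇑f) A V}} := by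
      refine ⟨{x}, h_fin _ (Set.finite_singleton x), U, hU, ?_⟩
      ext f
      constructor
      · intro hf y hy
        rw [Set.eq_of_mem_singleton hy]
        exact hf
      · intro hf
        exact hf (Set.mem_singleton x)
    exact TopologicalSpace.GenerateOpen.basic _ hmem
  have key : ∀ (x₀ : X) (K : Set (CT X 𝒯)),
      TendstoUniformlyOn (fun (x : X) (f : CT X 𝒯) => f.toCM x) (fun f => f.toCM x₀)
        (𝓝 x₀) K ↔
      EquicontinuousAt (fun f : K => (((f : CT X 𝒯).toCM : C(X, ℝ)) : X → ℝ)) x₀ := by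
    intro x₀ K
    rw [Metric.tendstoUniformlyOn_iff, Metric.equicontinuousAt_iff_right]
    refine forall₂_congr fun ε hε => Filter.eventually_congr (Filter.Eventually.of_forall fun x => ?_)
    simp [Subtype.forall]
  refine ⟨hev, fun h => ?_⟩
  rw [continuous_iff_continuousAt]
  constructor
  · intro hc K hK x₀
    exact (key x₀ K).mp
      (ContinuousMap.tendsto_iff_forall_isCompact_tendstoUniformlyOn.mp (hc x₀) K hK)
  · intro hK x₀
    exact ContinuousMap.tendsto_iff_forall_isCompact_tendstoUniformlyOn.mpr
      fun K hKc => (key x₀ K).mpr (hK K hKc x₀)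
end

section
/- A real Banach space E is weakly Ascoli if and only if E is finite-dimensional; that is, E equipped with its weak topology σ(E,E′) is an Ascoli space if and only if dim E < ∞. -/
open Set Topology

/-- A topological space `Y` is Ascoli if every compact subset of `C(Y,ℝ)` (with the
compact-open topology) is equicontinuous. -/
def IsAscoli (Y : Type*) [TopologicalSpace Y] : Prop :=
  ∀ K : Set C(Y, ℝ), IsCompact K → Equicontinuous fun f : K => ((f : C(Y, ℝ)) : Y → ℝ)

open Filter Metric Uniformity NormedSpace

section Ascoli

/-- Every proper metric space is Ascoli. -/
lemma isAscoli_of_proper (X : Type*) [MetricSpace X] [ProperSpace X] : IsAscoli X := by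
  intro K hK x₀
  rw [Metric.equicontinuousAt_iff_right]
  intro ε hε
  set B : Set X := closedBall x₀ 1 with hB
  have hBc : IsCompact B := isCompact_closedBall x₀ 1
  have hx₀B : x₀ ∈ B := mem_closedBall_self zero_le_one
  haveI : CompactSpace B := isCompact_iff_compactSpace.mp hBc
  have hK' : IsCompact ((fun f : C(X, ℝ) => f.restrict B) '' K) :=
    hK.image (ContinuousMap.continuous_restrict B)
  have hV : {p : C(B, ℝ) × C(B, ℝ) | dist p.1 p.2 < ε / 3} ∈ 𝓤 C(B, ℝ) :=
    dist_mem_uniformity (by linarith)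
  obtain ⟨t, htfin, hcover⟩ := hK'.totallyBounded _ hV
  set x₀' : B := ⟨x₀, hx₀B⟩
  have hS : (⋂ c ∈ t, {y : B | dist (c y) (c x₀') < ε / 3}) ∈ 𝓝 x₀' := by
    refine (Filter.biInter_mem htfin).mpr fun c _ => ?_
    have : Continuous fun y : B => dist (c y) (c x₀') := (map_continuous c).dist continuous_const
    exact this.continuousAt.preimage_mem_nhds (Iio_mem_nhds (by simp; linarith))
  rw [nhds_subtype] at hS
  obtain ⟨W, hW, hWS⟩ := hS
  have hBnhds : B ∈ 𝓝 x₀ := by rw [hB]; exact closedBall_mem_nhds x₀ one_pos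
  filter_upwards [hW, hBnhds] with x hxW hxB
  intro i
  obtain ⟨f, hfK⟩ := i
  have : f.restrict B ∈ ⋃ y ∈ t, {g : C(B,ℝ) | dist g y < ε / 3} :=
    hcover ⟨f, hfK, rfl⟩
  obtain ⟨c, hct, hfc⟩ := by simpa using this
  set x' : B := ⟨x, hxB⟩
  have h1 : dist (f x₀) (c x₀') < ε / 3 := by
    have := ContinuousMap.dist_apply_le_dist (f := f.restrict B) (g := c) x₀'
    simp only [ContinuousMap.restrict_apply] at this
    linarith
  have h2 : dist (c x₀') (c x') < ε / 3 := by
    have hx'W : x' ∈ Subtype.val ⁻¹' W := hxW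
    have := (Set.mem_iInter₂.mp (hWS hx'W)) c hct
    rw [dist_comm]; exact this
  have h3 : dist (c x') (f x) < ε / 3 := by
    have := ContinuousMap.dist_apply_le_dist (f := f.restrict B) (g := c) x'
    simp only [ContinuousMap.restrict_apply] at this
    rw [dist_comm]; linarith
  calc dist (f x₀) (f x) ≤ dist (f x₀) (c x₀') + dist (c x₀') (c x') + dist (c x') (f x) :=
        dist_triangle4 _ _ _ _
    _ < ε := by linarith

/-- Being Ascoli transfers along homeomorphisms. -/
lemma IsAscoli.of_homeomorph {X Y : Type*} [TopologicalSpace X] [TopologicalSpace Y]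
    (h : X ≃ₜ Y) (hY : IsAscoli Y) : IsAscoli X := by
  intro K hK
  set Φ : C(X, ℝ) → C(Y, ℝ) := fun f => f.comp ⟨h.symm, h.symm.continuous⟩ with hΦ
  have hΦc : Continuous Φ := ContinuousMap.continuous_precomp _
  have hK' : IsCompact (Φ '' K) := hK.image hΦc
  have heq := hY _ hK'
  intro x₀ U hU
  have hmem := (h.continuous.continuousAt (x := x₀)) (heq (h x₀) U hU)
  refine Filter.mem_of_superset hmem fun x hx => ?_
  intro i
  have := hx ⟨Φ i.1, ⟨i.1, i.2, rfl⟩⟩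
  simpa [Φ, ContinuousMap.comp_apply] using this

end Ascoli

section Weak

variable {E : Type*} [NormedAddCommGroup E] [NormedSpace ℝ E]

lemma weak_eval_cont (u : E →L[ℝ] ℝ) : Continuous fun x : WeakSpace ℝ E => u x :=
  WeakBilin.eval_continuous ((topDualPairing ℝ E).flip) u

/-- The natural inclusion of the dual into `C(WeakSpace ℝ E, ℝ)`. -/
noncomputable def dualToC (u : E →L[ℝ] ℝ) : C(WeakSpace ℝ E, ℝ) :=
  ⟨fun x => u x, weak_eval_cont u⟩

variable (E) in
lemma weak_t2 : T2Space (WeakSpace ℝ E) := by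
  have hind : IsInducing (fun (x : WeakSpace ℝ E) (u : E →L[ℝ] ℝ) => u x) := ⟨rfl⟩
  have hinj : Function.Injective (fun (x : WeakSpace ℝ E) (u : E →L[ℝ] ℝ) => u x) := by
    intro x y hxy
    have h : ∀ u : E →L[ℝ] ℝ, u x = u y := fun u => congrFun hxy u
    exact (NormedSpace.eq_iff_forall_dual_eq (𝕜 := ℝ) (E := E)).mpr h
  exact (IsEmbedding.mk hind hinj).t2Space

variable (E) in
lemma weak_homeo [FiniteDimensional ℝ E] : Nonempty (WeakSpace ℝ E ≃ₜ E) := by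
  haveI := weak_t2 E
  haveI : FiniteDimensional ℝ (WeakSpace ℝ E) := inferInstanceAs (FiniteDimensional ℝ E)
  haveI : ContinuousSMul ℝ (WeakSpace ℝ E) :=
    WeakBilin.instContinuousSMul (topDualPairing ℝ E).flip
  have hcont : Continuous ((toWeakSpace ℝ E).symm : WeakSpace ℝ E →ₗ[ℝ] E) :=
    LinearMap.continuous_of_finiteDimensional _
  exact ⟨{ toEquiv := (toWeakSpace ℝ E).symm.toEquiv
           continuous_toFun := hcont
           continuous_invFun := (toWeakSpaceCLM ℝ E).continuous }⟩

lemma dual_infinite (h : ¬ FiniteDimensional ℝ E) : ¬ FiniteDimensional ℝ (E →L[ℝ] ℝ) := by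
  intro hD
  apply h
  haveI : FiniteDimensional ℝ (StrongDual ℝ (StrongDual ℝ E)) := by
    have : FiniteDimensional ℝ (StrongDual ℝ E) := hD
    infer_instance
  exact FiniteDimensional.of_injective (inclusionInDoubleDualLi ℝ (E := E)).toLinearMap
    (inclusionInDoubleDualLi ℝ (E := E)).injective

lemma exists_indep (V : Type*) [AddCommGroup V] [Module ℝ V] (h : ¬ FiniteDimensional ℝ V) :
    ∃ g : ℕ → V, LinearIndependent ℝ g := by
  have hinf : (Module.Basis.ofVectorSpaceIndex ℝ V).Infinite := by
    by_contra hfin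
    rw [Set.not_infinite] at hfin
    haveI := hfin.fintype
    exact h (Module.Finite.of_basis (Module.Basis.ofVectorSpace ℝ V))
  haveI := hinf.to_subtype
  let emb := Infinite.natEmbedding (Module.Basis.ofVectorSpaceIndex ℝ V)
  exact ⟨(Module.Basis.ofVectorSpace ℝ V) ∘ emb,
    (Module.Basis.ofVectorSpace ℝ V).linearIndependent.comp emb emb.injective⟩

/-- A weakly compact set is norm-bounded. -/
lemma weak_compact_bounded {C : Set (WeakSpace ℝ E)} (hC : IsCompact C) :
    ∃ M : ℝ, 0 ≤ M ∧ ∀ x ∈ C, ‖(toWeakSpace ℝ E).symm x‖ ≤ M := by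
  have hpt : ∀ u : E →L[ℝ] ℝ, ∃ M, ∀ i : C,
      ‖inclusionInDoubleDual ℝ E ((toWeakSpace ℝ E).symm i.1) u‖ ≤ M := by
    intro u
    have himg : IsCompact ((fun x : WeakSpace ℝ E => u x) '' C) := hC.image (weak_eval_cont u)
    obtain ⟨M, hM⟩ := himg.isBounded.exists_norm_le
    exact ⟨M, fun i => hM _ ⟨i.1, i.2, rfl⟩⟩
  obtain ⟨M', hM'⟩ := banach_steinhaus
    (g := fun i : C => inclusionInDoubleDual ℝ E ((toWeakSpace ℝ E).symm i.1)) hpt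
  refine ⟨max M' 0, le_max_right _ _, fun x hx => ?_⟩
  refine norm_le_dual_bound ℝ _ (le_max_right _ _) fun f => ?_
  have h1 : ‖inclusionInDoubleDual ℝ E ((toWeakSpace ℝ E).symm x) f‖
      ≤ ‖inclusionInDoubleDual ℝ E ((toWeakSpace ℝ E).symm x)‖ * ‖f‖ :=
    ContinuousLinearMap.le_opNorm _ f
  have h2 := hM' ⟨x, hx⟩
  have h3 : inclusionInDoubleDual ℝ E ((toWeakSpace ℝ E).symm x) f
      = f ((toWeakSpace ℝ E).symm x) := rfl
  rw [h3] at h1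
  calc ‖f ((toWeakSpace ℝ E).symm x)‖
      ≤ ‖inclusionInDoubleDual ℝ E ((toWeakSpace ℝ E).symm x)‖ * ‖f‖ := h1
    _ ≤ max M' 0 * ‖f‖ :=
        mul_le_mul_of_nonneg_right (le_trans h2 (le_max_left _ _)) (norm_nonneg f)

/-- Equicontinuity (for the weak topology) of a sequence of functionals at `0` forces them
into a fixed finite-dimensional subspace of the algebraic dual. -/
lemma finite_span_of_equicontinuous (f : ℕ → (E →L[ℝ] ℝ))
    (K : Set C(WeakSpace ℝ E, ℝ)) (hfK : ∀ n, dualToC (f n) ∈ K)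
    (heq : Equicontinuous fun k : K => (k.1 : WeakSpace ℝ E → ℝ)) :
    ∃ (W : Submodule ℝ (E →ₗ[ℝ] ℝ)), FiniteDimensional ℝ W ∧
      ∀ n, ((f n : E →ₗ[ℝ] ℝ)) ∈ W := by
  have h0 := heq 0 _ (Metric.dist_mem_uniformity one_pos)
  have hind : IsInducing (fun (x : WeakSpace ℝ E) (u : E →L[ℝ] ℝ) => u x) := ⟨rfl⟩
  rw [hind.nhds_eq_comap 0] at h0
  obtain ⟨T, hT, hTS⟩ := Filter.mem_comap.mp h0
  rw [nhds_pi] at hT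
  obtain ⟨I, hIfin, t, ht, hIt⟩ := Filter.mem_pi.mp hT
  haveI : Finite I := hIfin.to_subtype
  have hker : ∀ n, (⨅ u : I, LinearMap.ker (u.1 : E →ₗ[ℝ] ℝ)) ≤
      LinearMap.ker ((f n : E →ₗ[ℝ] ℝ)) := by
    intro n x hx
    rw [Submodule.mem_iInf] at hx
    have hmul : ∀ c : ℝ, |f n (c • x)| < 1 := by
      intro c
      have hmem : (fun u : E →L[ℝ] ℝ => u ((c • x : E) : WeakSpace ℝ E)) ∈ I.pi t := by
        intro u huI
        have huz : u (c • x) = 0 := by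
          have hux : u x = 0 := hx ⟨u, huI⟩
          simp [hux]
        show u (c • x) ∈ t u
        rw [huz]
        have := mem_of_mem_nhds (ht u)
        convert this using 1
        exact (map_zero u).symm
      have hS : ((c • x : E) : WeakSpace ℝ E) ∈
          {x : WeakSpace ℝ E | ∀ i : K, dist (i.1 0) (i.1 x) < 1} := hTS (hIt hmem)
      have := hS ⟨dualToC (f n), hfK n⟩
      have h00 : (dualToC (f n)) (0 : WeakSpace ℝ E) = 0 := by simp [dualToC]; exact map_zero (f n)
      rw [h00] at this
      simpa [dualToC, Real.dist_eq] using this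
    by_contra hne
    have hne' : f n x ≠ 0 := hne
    have := hmul (2 / |f n x|)
    rw [map_smul] at this
    have habs : |(2 / |f n x|) • f n x| = 2 := by
      have h1 : |f n x| ≠ 0 := abs_ne_zero.mpr hne'
      rw [smul_eq_mul, abs_mul, abs_div, abs_abs, abs_two]
      field_simp
    rw [habs] at this
    linarith
  refine ⟨Submodule.span ℝ (Set.range fun u : I => (u.1 : E →ₗ[ℝ] ℝ)), ?_, ?_⟩
  · exact FiniteDimensional.span_of_finite ℝ (Set.finite_range _)
  · exact fun n => mem_span_of_iInf_ker_le_ker (hker n)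

end Weak

/-- A real Banach space `E` is weakly Ascoli if and only if `E` is finite-dimensional. -/
theorem statement4 (E : Type*) [NormedAddCommGroup E] [NormedSpace ℝ E] [CompleteSpace E] :
    IsAscoli (WeakSpace ℝ E) ↔ FiniteDimensional ℝ E := by
  constructor
  · intro hA
    by_contra hfd
    -- pick a linearly independent sequence in the dual
    obtain ⟨g, hg⟩ := exists_indep (E →L[ℝ] ℝ) (dual_infinite hfd)
    have hgne : ∀ n, g n ≠ 0 := fun n => hg.ne_zero n
    set c : ℕ → ℝ := fun n => ((n : ℝ) + 1)⁻¹ * ‖g n‖⁻¹ with hc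
    have hcne : ∀ n, c n ≠ 0 := by
      intro n
      have h1 : ((n : ℝ) + 1)⁻¹ ≠ 0 := by positivity
      have h2 : ‖g n‖⁻¹ ≠ 0 := inv_ne_zero (norm_ne_zero_iff.mpr (hgne n))
      exact mul_ne_zero h1 h2
    set f : ℕ → (E →L[ℝ] ℝ) := fun n => c n • g n with hf
    have hfnorm : ∀ n, ‖f n‖ = ((n : ℝ) + 1)⁻¹ := by
      intro n
      have hrfl : f n = (((n : ℝ) + 1)⁻¹ * ‖g n‖⁻¹) • g n := rfl
      rw [hrfl, norm_smul (((n : ℝ) + 1)⁻¹ * ‖g n‖⁻¹) (g n), Real.norm_eq_abs, abs_mul, abs_inv, abs_inv, abs_norm,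
        abs_of_pos (show (0:ℝ) < (n:ℝ) + 1 by positivity), mul_assoc,
        inv_mul_cancel₀ (norm_ne_zero_iff.mpr (hgne n)), mul_one]
    -- the corresponding sequence in C(WeakSpace ℝ E, ℝ) converges to 0
    have htend : Tendsto (fun n => dualToC (f n)) atTop (𝓝 (dualToC 0)) := by
      rw [ContinuousMap.tendsto_iff_forall_isCompact_tendstoUniformlyOn]
      intro C hC
      obtain ⟨M, hM0, hM⟩ := weak_compact_bounded hC
      rw [Metric.tendstoUniformlyOn_iff]
      intro ε hε
      have hlim : Tendsto (fun n : ℕ => ((n : ℝ) + 1)⁻¹ * M) atTop (𝓝 0) := by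
        have h1 : Tendsto (fun n : ℕ => ((n : ℝ) + 1)⁻¹) atTop (𝓝 0) := by
          simpa using tendsto_one_div_add_atTop_nhds_zero_nat (𝕜 := ℝ)
        simpa using h1.mul_const M
      filter_upwards [hlim.eventually_lt_const hε] with n hn x hx
      have hb : ‖f n ((toWeakSpace ℝ E).symm x)‖ ≤ ‖f n‖ * ‖(toWeakSpace ℝ E).symm x‖ :=
        ContinuousLinearMap.le_opNorm _ _
      have hfx : dualToC (f n) x = f n ((toWeakSpace ℝ E).symm x) := rfl
      have h0x : dualToC (0 : E →L[ℝ] ℝ) x = 0 := by simp [dualToC]; rfl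
      rw [h0x, hfx, Real.dist_eq]
      have : |f n ((toWeakSpace ℝ E).symm x)| ≤ ((n : ℝ) + 1)⁻¹ * M := by
        calc |f n ((toWeakSpace ℝ E).symm x)| ≤ ‖f n‖ * ‖(toWeakSpace ℝ E).symm x‖ := hb
          _ ≤ ((n : ℝ) + 1)⁻¹ * M := by
              rw [hfnorm n]
              exact mul_le_mul_of_nonneg_left (hM x hx) (by positivity)
      calc |0 - f n ((toWeakSpace ℝ E).symm x)| = |f n ((toWeakSpace ℝ E).symm x)| := by
            rw [zero_sub, abs_neg]
        _ ≤ ((n : ℝ) + 1)⁻¹ * M := this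
        _ < ε := hn
    set K : Set C(WeakSpace ℝ E, ℝ) := insert (dualToC 0) (Set.range fun n => dualToC (f n))
      with hK
    have hKc : IsCompact K := htend.isCompact_insert_range
    have heq := hA K hKc
    obtain ⟨W, hWfd, hWmem⟩ := finite_span_of_equicontinuous f K
      (fun n => Set.mem_insert_of_mem _ ⟨n, rfl⟩) heq
    -- contradiction with linear independence
    have hfind : LinearIndependent ℝ f := by
      have := hg.units_smul fun n => Units.mk0 (c n) (hcne n)
      convert this using 1
      · funext n; rfl
      · rfl
    have hflind : LinearIndependent ℝ (fun n => (f n : E →ₗ[ℝ] ℝ)) := by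
      refine hfind.map' (ContinuousLinearMap.coeLM ℝ) ?_
      rw [LinearMap.ker_eq_bot]
      exact ContinuousLinearMap.coe_injective
    have hv : LinearIndependent ℝ (fun n => (⟨(f n : E →ₗ[ℝ] ℝ), hWmem n⟩ : W)) := by
      apply LinearIndependent.of_comp W.subtype
      exact hflind
    exact Module.Finite.not_linearIndependent_of_infinite _ hv
  · intro hfd
    obtain ⟨h⟩ := weak_homeo E
    haveI : ProperSpace E := FiniteDimensional.proper ℝ E
    exact IsAscoli.of_homeomorph h (isAscoli_of_proper E)
end

section
/- Let E be a real Banach space. The weak* dual of E, i.e., the topological dual E′ endowed with the weak* topology σ(E′,E) of pointwise convergence on E (in Mathlib, WeakDual ℝ E), is an Ascoli space if and only if E is finite-dimensional. -/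
open Set Topology

section Helpers

open Filter

/-- Every locally compact space is Ascoli. -/
lemma isAscoli_of_locallyCompact (Y : Type*) [TopologicalSpace Y] [LocallyCompactSpace Y] :
    IsAscoli Y := by
  intro K hK y₀
  rw [Metric.equicontinuousAt_iff_right]
  intro ε hε
  have hcont : Continuous fun p : C(Y, ℝ) × Y => p.1 p.2 := continuous_eval
  have key : ∀ f ∈ K, ∃ O ∈ 𝓝 f, ∃ U ∈ 𝓝 y₀,
      ∀ g ∈ O, ∀ y ∈ U, dist ((g : C(Y, ℝ)) y) (f y₀) < ε / 2 := by
    intro f hf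
    have hW : {p : C(Y, ℝ) × Y | dist (p.1 p.2) (f y₀) < ε / 2} ∈ 𝓝 (f, y₀) := by
      have : Continuous fun p : C(Y, ℝ) × Y => dist (p.1 p.2) (f y₀) :=
        (hcont.dist continuous_const)
      have hopen : IsOpen {p : C(Y, ℝ) × Y | dist (p.1 p.2) (f y₀) < ε / 2} :=
        isOpen_lt this continuous_const
      exact hopen.mem_nhds (by simp [dist_self, half_pos hε])
    rw [mem_nhds_prod_iff] at hW
    obtain ⟨O, hO, U, hU, hOU⟩ := hW
    exact ⟨O, hO, U, hU, fun g hg y hy => hOU (Set.mk_mem_prod hg hy)⟩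
  choose O hO U hU hOU using key
  obtain ⟨t, ht⟩ := hK.elim_nhds_subcover' O hO
  have hUmem : (⋂ f ∈ t, U f.1 f.2) ∈ 𝓝 y₀ :=
    (Filter.biInter_finset_mem t).2 fun f _ => hU f.1 f.2
  filter_upwards [hUmem] with y hy
  intro i
  obtain ⟨f', hf't, hfO⟩ := Set.mem_iUnion₂.1 (ht i.2)
  have hy' : y ∈ U f'.1 f'.2 := Set.mem_iInter₂.1 hy f' hf't
  have hy₀' : y₀ ∈ U f'.1 f'.2 := mem_of_mem_nhds (hU f'.1 f'.2)
  have h1 : dist ((i : C(Y, ℝ)) y) ((f' : C(Y, ℝ)) y₀) < ε / 2 := hOU f'.1 f'.2 _ hfO y hy'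
  have h2 : dist ((i : C(Y, ℝ)) y₀) ((f' : C(Y, ℝ)) y₀) < ε / 2 := hOU f'.1 f'.2 _ hfO y₀ hy₀'
  calc dist ((i : C(Y, ℝ)) y₀) ((i : C(Y, ℝ)) y)
      ≤ dist ((i : C(Y, ℝ)) y₀) ((f' : C(Y, ℝ)) y₀) + dist ((i : C(Y, ℝ)) y) ((f' : C(Y, ℝ)) y₀) :=
        dist_triangle_right _ _ _
    _ < ε / 2 + ε / 2 := add_lt_add h2 h1
    _ = ε := add_halves ε

variable {E : Type*} [NormedAddCommGroup E] [NormedSpace ℝ E]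

/-- Evaluation at `x : E` as a continuous map on the weak* dual. -/
noncomputable def evalCM (x : E) : C(WeakDual ℝ E, ℝ) :=
  ⟨fun f => f x, WeakDual.eval_continuous x⟩

lemma norm_bound_of_compact [CompleteSpace E] {Q : Set (WeakDual ℝ E)} (hQ : IsCompact Q) :
    ∃ C : ℝ, 0 ≤ C ∧ ∀ f ∈ Q, ‖WeakDual.toStrongDual f‖ ≤ C := by
  have hb : ∀ x : E, ∃ M, ∀ f : Q, ‖WeakDual.toStrongDual f.1 x‖ ≤ M := by
    intro x
    have h1 : IsCompact ((fun f : WeakDual ℝ E => f x) '' Q) :=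
      hQ.image (WeakDual.eval_continuous x)
    obtain ⟨M, hM⟩ := h1.isBounded.exists_norm_le
    exact ⟨M, fun f => hM _ (Set.mem_image_of_mem _ f.2)⟩
  obtain ⟨C', hC'⟩ := banach_steinhaus (g := fun f : Q => WeakDual.toStrongDual f.1) hb
  exact ⟨max C' 0, le_max_right _ _,
    fun f hf => le_trans (hC' ⟨f, hf⟩) (le_max_left _ _)⟩

lemma continuous_evalCM [CompleteSpace E] : Continuous (evalCM (E := E)) := by
  rw [continuous_iff_continuousAt]
  intro x₀
  rw [ContinuousAt, ContinuousMap.tendsto_iff_forall_isCompact_tendstoUniformlyOn]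
  intro Q hQ
  obtain ⟨C, hC0, hC⟩ := norm_bound_of_compact hQ
  rw [Metric.tendstoUniformlyOn_iff]
  intro ε hε
  have hδ : 0 < ε / (C + 1) := div_pos hε (by linarith)
  filter_upwards [Metric.ball_mem_nhds x₀ hδ] with x hx f hf
  have hdist : dist (evalCM x₀ f) (evalCM x f) = ‖WeakDual.toStrongDual f (x₀ - x)‖ := by
    rw [dist_eq_norm]
    congr 1
    simp [evalCM, map_sub]
  rw [hdist]
  calc ‖WeakDual.toStrongDual f (x₀ - x)‖
      ≤ ‖WeakDual.toStrongDual f‖ * ‖x₀ - x‖ := (WeakDual.toStrongDual f).le_opNorm _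
    _ ≤ C * ‖x₀ - x‖ := by
        apply mul_le_mul_of_nonneg_right (hC f hf) (norm_nonneg _)
    _ < (C + 1) * (ε / (C + 1)) := by
        apply mul_lt_mul' (by linarith) ?_ (norm_nonneg _) (by linarith)
        rw [← dist_eq_norm, dist_comm]
        exact hx
    _ = ε := by field_simp

lemma finiteDimensional_of_isAscoli [CompleteSpace E]
    (h : IsAscoli (WeakDual ℝ E)) : FiniteDimensional ℝ E := by
  by_contra hfin
  -- a linearly independent sequence
  set b := Module.Basis.ofVectorSpace ℝ E with hb
  haveI hinf : Infinite (Module.Basis.ofVectorSpaceIndex ℝ E) := by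
    by_contra hI
    haveI : Finite (Module.Basis.ofVectorSpaceIndex ℝ E) := not_infinite_iff_finite.mp hI
    haveI := Fintype.ofFinite (Module.Basis.ofVectorSpaceIndex ℝ E)
    exact hfin (Module.Finite.of_basis b)
  set emb := Infinite.natEmbedding (Module.Basis.ofVectorSpaceIndex ℝ E) with hemb
  set v : ℕ → E := fun n => b (emb n) with hv
  have hvne : ∀ n, v n ≠ 0 := fun n => b.ne_zero _
  have hvind : LinearIndependent ℝ v := b.linearIndependent.comp emb emb.injective
  set c : ℕ → ℝ := fun n => (((n : ℝ) + 1) * ‖v n‖)⁻¹ with hc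
  have hcpos : ∀ n : ℕ, 0 < ((n : ℝ) + 1) * ‖v n‖ := fun n =>
    mul_pos (by positivity) (norm_pos_iff.2 (hvne n))
  have hcne : ∀ n, c n ≠ 0 := fun n => inv_ne_zero (hcpos n).ne'
  set g : ℕ → E := fun n => c n • v n with hg
  have hgnorm : ∀ n, ‖g n‖ = ((n : ℝ) + 1)⁻¹ := by
    intro n
    have h1 : (0:ℝ) < (n:ℝ)+1 := by positivity
    have h2 : (0:ℝ) < ‖v n‖ := norm_pos_iff.2 (hvne n)
    show ‖c n • v n‖ = _
    rw [norm_smul]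
    show ‖(((n : ℝ) + 1) * ‖v n‖)⁻¹‖ * ‖v n‖ = _
    rw [Real.norm_eq_abs, abs_inv, abs_mul, abs_of_pos h1, abs_of_pos h2, mul_inv, mul_assoc,
      inv_mul_cancel₀ h2.ne', mul_one]
  have hgtend : Tendsto g atTop (𝓝 0) := by
    rw [tendsto_zero_iff_norm_tendsto_zero]
    simp only [hgnorm]
    exact tendsto_one_div_add_atTop_nhds_zero_nat.congr (by simp [one_div])
  have hScomp : IsCompact (insert (0 : E) (Set.range g)) := hgtend.isCompact_insert_range
  set S := insert (0 : E) (Set.range g) with hS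
  set K : Set C(WeakDual ℝ E, ℝ) := evalCM '' S with hK
  have hKcomp : IsCompact K := hScomp.image continuous_evalCM
  have heq := h K hKcomp (0 : WeakDual ℝ E)
  rw [Metric.equicontinuousAt_iff_right] at heq
  have h1 := heq 1 one_pos
  -- h1 : ∀ᶠ φ in 𝓝 0, ∀ i : K, dist (i 0) (i φ) < 1
  -- extract a finite set of points determining a weak* neighbourhood
  have hinj : Function.Injective (topDualPairing ℝ E) := by
    intro f g hfg
    exact ContinuousLinearMap.coe_injective hfg
  have hemb' := (WeakBilin.isEmbedding hinj).toIsInducing.nhds_eq_comap (0 : WeakDual ℝ E)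
  erw [hemb'] at h1
  obtain ⟨V, hV, hVsub⟩ := Filter.mem_comap.1 h1
  have hV0 : V ∈ 𝓝 (0 : E → ℝ) := by
    have h00 : ((fun (x : WeakDual ℝ E) (y : E) => topDualPairing ℝ E x y) 0) = (0 : E → ℝ) := by
      ext y; simp
      rfl
    rw [← h00]
    exact hV
  rw [nhds_pi] at hV0
  obtain ⟨I, hIfin, t, ht, hpi⟩ := Filter.mem_pi.1 hV0
  -- the span of I is finite dimensional and closed
  set W := Submodule.span ℝ I with hW
  haveI hWfd : FiniteDimensional ℝ W := FiniteDimensional.span_of_finite ℝ hIfin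
  have hWclosed : IsClosed (W : Set E) := Submodule.closed_of_finiteDimensional W
  -- some g n is not in W
  have hgn : ∃ n, g n ∉ W := by
    by_contra hall
    push_neg at hall
    have hvmem : ∀ n, v n ∈ W := by
      intro n
      have : v n = (c n)⁻¹ • g n := by
        rw [hg]; simp [smul_smul, inv_mul_cancel₀ (hcne n)]
      rw [this]
      exact W.smul_mem _ (hall n)
    set vs : ℕ → W := fun n => ⟨v n, hvmem n⟩ with hvs
    have hvsind : LinearIndependent ℝ vs := by
      apply LinearIndependent.of_comp W.subtype
      convert hvind
      rfl
    haveI : Finite ℕ := hvsind.finite_of_isNoetherian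
    exact not_finite ℕ
  obtain ⟨n, hn⟩ := hgn
  -- Hahn-Banach separation
  obtain ⟨φ, u, hxu, hspan⟩ :=
    geometric_hahn_banach_point_closed W.convex hWclosed hn
  have hu0 : u < 0 := by
    have := hspan 0 W.zero_mem
    simpa using this
  have hφ0 : ∀ y ∈ W, φ y = 0 := by
    intro y hy
    by_contra hne
    have hmem : ((u - 1) / φ y) • y ∈ W := W.smul_mem _ hy
    have := hspan _ hmem
    rw [map_smul, smul_eq_mul, div_mul_cancel₀ _ hne] at this
    linarith
  have hφx : φ (g n) < 0 := lt_trans hxu hu0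
  -- scaled functionals are in the neighbourhood
  have hscale : ∀ d : ℝ, |d * φ (g n)| < 1 := by
    intro d
    have hmemV : (fun y : E => topDualPairing ℝ E (StrongDual.toWeakDual (d • φ)) y) ∈ V := by
      apply hpi
      intro y hy
      show topDualPairing ℝ E (StrongDual.toWeakDual (d • φ)) y ∈ t y
      have hy0 : φ y = 0 := hφ0 y (Submodule.subset_span hy)
      have : topDualPairing ℝ E (StrongDual.toWeakDual (d • φ)) y = 0 := by
        simp [topDualPairing_apply, hy0]
        show (d • φ) y = 0
        simp [hy0]
      rw [this]
      exact mem_of_mem_nhds (ht y)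
    have hd := hVsub hmemV
    have h3 := hd ⟨evalCM (g n), Set.mem_image_of_mem _ (Set.mem_insert_of_mem _ ⟨n, rfl⟩)⟩
    have h4 : dist ((0 : WeakDual ℝ E) (g n))
        ((StrongDual.toWeakDual (d • φ) : WeakDual ℝ E) (g n)) < 1 := h3
    have e1 : (0 : WeakDual ℝ E) (g n) = 0 := rfl
    have e2 : (StrongDual.toWeakDual (d • φ) : WeakDual ℝ E) (g n) = d * φ (g n) := rfl
    rw [e1, e2, dist_zero_left, Real.norm_eq_abs] at h4
    exact h4
  have h2 := hscale (2 / |φ (g n)|)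
  have habs : |φ (g n)| ≠ 0 := abs_ne_zero.2 hφx.ne
  rw [abs_mul, abs_div, abs_abs, abs_two, div_mul_cancel₀ _ habs] at h2
  linarith

end Helpers

/-- The weak* dual of a real Banach space `E` is an Ascoli space if and only if `E` is
finite-dimensional. -/
theorem statement5 (E : Type*) [NormedAddCommGroup E] [NormedSpace ℝ E] [CompleteSpace E] :
    IsAscoli (WeakDual ℝ E) ↔ FiniteDimensional ℝ E := by
  constructor
  · exact finiteDimensional_of_isAscoli
  · intro hfd
    haveI : FiniteDimensional ℝ (StrongDual ℝ E) := inferInstance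
    haveI : FiniteDimensional ℝ (WeakDual ℝ E) :=
      StrongDual.toWeakDual.finiteDimensional
    have hcont : Continuous (WeakDual.toStrongDual : WeakDual ℝ E → StrongDual ℝ E) :=
      LinearMap.continuous_of_finiteDimensional (WeakDual.toStrongDual (𝕜 := ℝ) (E := E)).toLinearMap
    let h : WeakDual ℝ E ≃ₜ StrongDual ℝ E :=
      { WeakDual.toStrongDual.toEquiv with
        continuous_toFun := hcont
        continuous_invFun := NormedSpace.Dual.toWeakDual_continuous }
    haveI : ProperSpace (StrongDual ℝ E) := FiniteDimensional.proper ℝ _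
    haveI : LocallyCompactSpace (WeakDual ℝ E) := h.locallyCompactSpace_iff.mpr inferInstance
    exact isAscoli_of_locallyCompact _
end

section
/- Let X be a Hausdorff real locally convex space that is c₀-barrelled and weakly Ascoli. Then every subset A of the topological dual X′ that is σ(X′,X)-bounded (i.e., for every x ∈ X the set {f(x) : f ∈ A} is bounded in ℝ) spans a finite-dimensional linear subspace of X′. -/
open Set Topology Filter Pointwise

/-- A locally convex space `X` is `c₀`-barrelled if every sequence of continuous linear
functionals converging to `0` pointwise on `X` is equicontinuous. -/
def C0Barrelled (X : Type*) [AddCommGroup X] [Module ℝ X] [TopologicalSpace X] : Prop :=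
  ∀ u : ℕ → (X →L[ℝ] ℝ),
    (∀ x : X, Tendsto (fun n => u n x) atTop (nhds 0)) →
      Equicontinuous fun n => ((u n : X →L[ℝ] ℝ) : X → ℝ)

section Aux

variable {X : Type*} [AddCommGroup X] [Module ℝ X] [TopologicalSpace X]
    [IsTopologicalAddGroup X] [ContinuousSMul ℝ X]

/-- An equicontinuous sequence of continuous linear functionals which tends to zero pointwise is
uniformly bounded on every weakly compact set.  This is proved by embedding `X` into
`C₀(ℕ, ℝ)` via the sequence, and applying the Banach–Steinhaus theorem in the bidual of
`C₀(ℕ, ℝ)` to the family indexed by the compact set. -/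
theorem aux_uniform_bound (g : ℕ → X →L[ℝ] ℝ)
    (hg0 : ∀ x : X, Tendsto (fun n => g n x) atTop (nhds 0))
    (U : Set X) (hU : U ∈ 𝓝 (0 : X)) (hUb : ∀ x ∈ U, ∀ n, |g n x| ≤ 1)
    {C : Set (WeakSpace ℝ X)} (hC : IsCompact C) :
    ∃ M : ℝ, ∀ n : ℕ, ∀ x ∈ C, |g n x| ≤ M := by
  classical
  -- the map `x ↦ (g n x)ₙ` into `C₀(ℕ, ℝ)`
  let lam0 : X → ZeroAtInftyContinuousMap ℕ ℝ := fun x =>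
    { toFun := fun n => g n x
      continuous_toFun := continuous_of_discreteTopology
      zero_at_infty' := by
        rw [cocompact_eq_cofinite, Nat.cofinite_eq_atTop]
        exact hg0 x }
  have lam_apply : ∀ (x : X) (n : ℕ), (lam0 x) n = g n x := fun _ _ => rfl
  have lam_norm_le : ∀ (x : X) (b : ℝ), 0 ≤ b → (∀ n, |g n x| ≤ b) → ‖lam0 x‖ ≤ b := by
    intro x b hb hbn
    rw [← ZeroAtInftyContinuousMap.norm_toBCF_eq_norm]
    refine (BoundedContinuousFunction.norm_le hb).2 fun n => ?_
    simpa [Real.norm_eq_abs, lam_apply] using hbn n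
  have lam_le_norm : ∀ (x : X) (n : ℕ), |g n x| ≤ ‖lam0 x‖ := by
    intro x n
    rw [← ZeroAtInftyContinuousMap.norm_toBCF_eq_norm]
    simpa [Real.norm_eq_abs, lam_apply] using
      BoundedContinuousFunction.norm_coe_le_norm (lam0 x).toBCF n
  let lamL : X →ₗ[ℝ] ZeroAtInftyContinuousMap ℕ ℝ :=
    { toFun := lam0
      map_add' := by intro x y; ext n; simp [lam0]
      map_smul' := by intro c x; ext n; simp [lam0] }
  have lam_cont : Continuous lamL := by
    apply continuous_of_continuousAt_zero lamL
    rw [ContinuousAt, map_zero, Metric.tendsto_nhds]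
    intro ε hε
    have hU2 : (ε / 2) • U ∈ 𝓝 (0 : X) := by
      rw [set_smul_mem_nhds_zero_iff (by positivity : (ε / 2) ≠ 0)]
      exact hU
    filter_upwards [hU2] with x hx
    rcases Set.mem_smul_set.mp hx with ⟨u, hu, rfl⟩
    rw [dist_zero_right]
    have : ‖lamL ((ε / 2) • u)‖ ≤ ε / 2 := by
      apply lam_norm_le _ _ (by positivity)
      intro n
      have : g n ((ε / 2) • u) = (ε / 2) * g n u := by
        rw [map_smul, smul_eq_mul]
      rw [this, abs_mul, abs_of_pos (by positivity : (0:ℝ) < ε / 2)]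
      calc ε / 2 * |g n u| ≤ ε / 2 * 1 := by
            exact mul_le_mul_of_nonneg_left (hUb u hu n) (by positivity)
        _ = ε / 2 := mul_one _
    calc ‖lamL ((ε / 2) • u)‖ ≤ ε / 2 := this
      _ < ε := half_lt_self hε
  let lamCL : X →L[ℝ] ZeroAtInftyContinuousMap ℕ ℝ := ⟨lamL, lam_cont⟩
  -- apply Banach-Steinhaus in the bidual of C₀(ℕ, ℝ)
  obtain ⟨M, hM⟩ := banach_steinhaus
    (g := fun c : C =>
      (NormedSpace.inclusionInDoubleDualLi ℝ
        (E := ZeroAtInftyContinuousMap ℕ ℝ)) (lamCL ((c : WeakSpace ℝ X) : X)))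
    (by
      intro φ
      set ψ : X →L[ℝ] ℝ := φ.comp lamCL with hψdef
      have hψ : Continuous fun x : WeakSpace ℝ X => ψ x :=
        WeakBilin.eval_continuous ((topDualPairing ℝ X).flip) ψ
      have hcomp : IsCompact ((fun x : WeakSpace ℝ X => ψ x) '' C) := hC.image hψ
      obtain ⟨b, hb⟩ := isBounded_iff_forall_norm_le.mp hcomp.isBounded
      refine ⟨b, fun c => ?_⟩
      exact hb _ ⟨c, c.2, rfl⟩)
  refine ⟨M, fun n x hx => ?_⟩
  calc |g n x| ≤ ‖lamCL x‖ := lam_le_norm x n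
    _ = ‖(NormedSpace.inclusionInDoubleDualLi ℝ
          (E := ZeroAtInftyContinuousMap ℕ ℝ)) (lamCL x)‖ :=
        ((NormedSpace.inclusionInDoubleDualLi ℝ
          (E := ZeroAtInftyContinuousMap ℕ ℝ)).norm_map _).symm
    _ ≤ M := hM ⟨x, hx⟩

end Aux

/-- If a `c₀`-barrelled Hausdorff real locally convex space `X` is weakly Ascoli, then every
`σ(X′,X)`-bounded subset of the dual spans a finite-dimensional subspace. -/
theorem statement6 {X : Type*} [AddCommGroup X] [Module ℝ X] [TopologicalSpace X]
    [IsTopologicalAddGroup X] [ContinuousSMul ℝ X] [LocallyConvexSpace ℝ X] [T2Space X]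
    (hc0 : C0Barrelled X) (hAsc : IsAscoli (WeakSpace ℝ X))
    (A : Set (X →L[ℝ] ℝ))
    (hbdd : ∀ x : X, Bornology.IsBounded ((fun f : X →L[ℝ] ℝ => f x) '' A)) :
    FiniteDimensional ℝ (Submodule.span ℝ A) := by
  classical
  by_contra hfin
  -- find a linearly independent sequence in `A`
  obtain ⟨b, hbA, hbspan, hbli⟩ := exists_linearIndependent ℝ A
  have hbinf : b.Infinite := by
    by_contra h
    rw [Set.not_infinite] at h
    have : FiniteDimensional ℝ (Submodule.span ℝ b) := FiniteDimensional.span_of_finite ℝ h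
    rw [hbspan] at this
    exact hfin this
  let e := Set.Infinite.natEmbedding b hbinf
  let f : ℕ → (X →L[ℝ] ℝ) := fun n => ((e n : b) : X →L[ℝ] ℝ)
  have hfA : ∀ n, f n ∈ A := fun n => hbA (e n).2
  have hfli : LinearIndependent ℝ f := hbli.comp e e.injective
  -- the scaled sequences
  let g : ℕ → (X →L[ℝ] ℝ) := fun n => (((n : ℝ) + 1)⁻¹) • f n
  have hgapp : ∀ (n : ℕ) (x : X), g n x = ((n : ℝ) + 1)⁻¹ * f n x := by
    intro n x; simp [g]
  have hinv : Tendsto (fun n : ℕ => ((n : ℝ) + 1)⁻¹) atTop (𝓝 0) := by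
    simpa [one_div] using tendsto_one_div_add_atTop_nhds_zero_nat (𝕜 := ℝ)
  have hg0 : ∀ x : X, Tendsto (fun n => g n x) atTop (nhds 0) := by
    intro x
    obtain ⟨Mx, hMx⟩ := isBounded_iff_forall_norm_le.mp (hbdd x)
    have hfx : ∀ n, ‖f n x‖ ≤ Mx := fun n => hMx _ ⟨f n, hfA n, rfl⟩
    have hb : ∀ n : ℕ, ‖g n x‖ ≤ Mx * ((n : ℝ) + 1)⁻¹ := by
      intro n
      rw [hgapp n x, Real.norm_eq_abs, abs_mul,
        abs_of_pos (by positivity : (0:ℝ) < ((n : ℝ) + 1)⁻¹)]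
      rw [mul_comm]
      exact mul_le_mul_of_nonneg_right (by simpa [Real.norm_eq_abs] using hfx n)
        (by positivity)
    have hMxt : Tendsto (fun n : ℕ => Mx * ((n : ℝ) + 1)⁻¹) atTop (𝓝 0) := by
      simpa using hinv.const_mul Mx
    exact squeeze_zero_norm hb hMxt
  -- equicontinuity of `g`
  have hequi := hc0 g hg0
  obtain ⟨U, hU, hUb'⟩ :=
    eventually_iff_exists_mem.mp (Metric.equicontinuousAt_iff_right.mp (hequi 0) 1 one_pos)
  have hUb : ∀ x ∈ U, ∀ n, |g n x| ≤ 1 := by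
    intro x hx n
    have := hUb' x hx n
    rw [Real.dist_eq, map_zero, zero_sub, abs_neg] at this
    exact this.le
  -- the doubly scaled sequence, as continuous maps on the weak space
  let h : ℕ → (X →L[ℝ] ℝ) := fun n => (((n : ℝ) + 1)⁻¹) • g n
  have hhapp : ∀ (n : ℕ) (x : X), h n x = ((n : ℝ) + 1)⁻¹ * g n x := by
    intro n x; simp [h]
  let hCm : ℕ → C(WeakSpace ℝ X, ℝ) := fun n =>
    ⟨fun x => h n x, WeakBilin.eval_continuous ((topDualPairing ℝ X).flip) (h n)⟩
  have htendC : Tendsto hCm atTop (𝓝 0) := by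
    rw [ContinuousMap.tendsto_iff_forall_isCompact_tendstoUniformlyOn]
    intro C hCcp
    obtain ⟨M, hM⟩ := aux_uniform_bound g hg0 U hU hUb hCcp
    rw [Metric.tendstoUniformlyOn_iff]
    intro ε hε
    have hMt : Tendsto (fun n : ℕ => M * ((n : ℝ) + 1)⁻¹) atTop (𝓝 0) := by
      simpa using hinv.const_mul M
    filter_upwards [hMt.eventually (gt_mem_nhds hε)] with n hn
    intro x hx
    have hle : dist ((0 : C(WeakSpace ℝ X, ℝ)) x) (hCm n x) ≤ M * ((n : ℝ) + 1)⁻¹ := by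
      have : (hCm n) x = ((n : ℝ) + 1)⁻¹ * g n x := hhapp n x
      rw [ContinuousMap.zero_apply, dist_comm, Real.dist_eq, sub_zero, this, abs_mul,
        abs_of_pos (by positivity : (0:ℝ) < ((n : ℝ) + 1)⁻¹), mul_comm]
      exact mul_le_mul_of_nonneg_right (hM n x hx) (by positivity)
    exact lt_of_le_of_lt hle hn
  -- apply the Ascoli property to the compact set given by the convergent sequence
  have hKcp : IsCompact (insert (0 : C(WeakSpace ℝ X, ℝ)) (Set.range hCm)) :=
    htendC.isCompact_insert_range
  have hEq := hAsc _ hKcp (0 : WeakSpace ℝ X)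
  obtain ⟨W, hW, hWp⟩ :=
    eventually_iff_exists_mem.mp (Metric.equicontinuousAt_iff_right.mp hEq 1 one_pos)
  have hsmall : ∀ x ∈ W, ∀ n : ℕ, |h n x| < 1 := by
    intro x hx n
    have := hWp x hx ⟨hCm n, Set.mem_insert_of_mem _ (Set.mem_range_self n)⟩
    have h0 : (hCm n) (0 : WeakSpace ℝ X) = 0 := map_zero (h n)
    rw [Real.dist_eq] at this
    have e' : (hCm n) x = h n x := rfl
    simpa [h0, e'] using this
  -- extract a finite family of functionals defining a weak neighborhood inside `W`
  obtain ⟨T, hT, hTsub⟩ :=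
    (mem_nhds_induced (fun (x : WeakSpace ℝ X) (ψ : X →L[ℝ] ℝ) => ψ x) 0 W).mp hW
  have h0fun : (fun ψ : X →L[ℝ] ℝ => ψ (0 : X)) = (fun _ => (0 : ℝ)) := by
    funext ψ; exact map_zero ψ
  rw [show (fun ψ : X →L[ℝ] ℝ => ψ (0 : WeakSpace ℝ X)) = (fun _ => (0 : ℝ)) from h0fun,
    nhds_pi] at hT
  obtain ⟨I, hIfin, t, ht, hsub⟩ := Filter.mem_pi.mp hT
  -- every `f n` vanishes on the common kernel of the functionals in `I`
  have hvanish : ∀ (n : ℕ) (x : X), (∀ φ ∈ I, φ x = 0) → f n x = 0 := by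
    intro n x hx
    have hmemW : ∀ r : ℝ, (r • x : WeakSpace ℝ X) ∈ W := by
      intro r
      apply hTsub
      show (fun ψ : X →L[ℝ] ℝ => ψ (r • x)) ∈ T
      apply hsub
      intro φ hφ
      show φ (r • x) ∈ t φ
      rw [map_smul, hx φ hφ, smul_zero]
      exact mem_of_mem_nhds (ht φ)
    have habs : ∀ r : ℝ, |r| * |h n x| < 1 := by
      intro r
      have := hsmall _ (hmemW r) n
      rwa [map_smul, smul_eq_mul, abs_mul] at this
    have hzero : h n x = 0 := by
      by_contra hne
      have hpos : 0 < |h n x| := abs_pos.mpr hne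
      have h2 := habs (2 / |h n x|)
      rw [abs_div, abs_two, abs_abs, div_mul_cancel₀ _ (ne_of_gt hpos)] at h2
      linarith
    have hne1 : ((n : ℝ) + 1)⁻¹ ≠ 0 := by positivity
    have : h n x = ((n : ℝ) + 1)⁻¹ * (((n : ℝ) + 1)⁻¹ * f n x) := by
      rw [hhapp n x, hgapp n x]
    rw [this] at hzero
    rcases mul_eq_zero.mp hzero with h' | h'
    · exact absurd h' hne1
    rcases mul_eq_zero.mp h' with h'' | h''
    · exact absurd h'' hne1
    · exact h''
  -- linear algebra: all the `f n` lie in the span of the finitely many functionals in `I`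
  haveI := hIfin.to_subtype
  let L : I → (X →ₗ[ℝ] ℝ) := fun φ => ((φ : X →L[ℝ] ℝ) : X →ₗ[ℝ] ℝ)
  have hmem : ∀ n, ((f n : X →L[ℝ] ℝ) : X →ₗ[ℝ] ℝ) ∈ Submodule.span ℝ (Set.range L) := by
    intro n
    apply mem_span_of_iInf_ker_le_ker (L := L)
    intro x hx
    simp only [Submodule.mem_iInf, LinearMap.mem_ker] at hx ⊢
    exact hvanish n x fun φ hφ => hx ⟨φ, hφ⟩
  haveI : FiniteDimensional ℝ (Submodule.span ℝ (Set.range L)) :=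
    FiniteDimensional.span_of_finite ℝ (Set.finite_range L)
  have hind : LinearIndependent ℝ (fun n => ((f n : X →L[ℝ] ℝ) : X →ₗ[ℝ] ℝ)) :=
    hfli.map' (ContinuousLinearMap.coeLM ℝ)
      (LinearMap.ker_eq_bot.mpr ContinuousLinearMap.coe_injective)
  let v : ℕ → (Submodule.span ℝ (Set.range L)) := fun n => ⟨_, hmem n⟩
  have hv : LinearIndependent ℝ v :=
    LinearIndependent.of_comp (Submodule.span ℝ (Set.range L)).subtype hind
  have := hv.lt_aleph0_of_finite
  simp [Cardinal.mk_nat] at this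
end

section
/- Let X be a Hausdorff real locally convex space that is c₀-barrelled and weakly Ascoli. Then X is linearly homeomorphic to a dense subspace of a product ℝ^Γ: there exist a set (index type) Γ and an injective continuous linear map e : X → ℝ^Γ (product topology) which is a topological embedding and has dense range (Γ may be taken to be a Hamel basis of the dual X′). -/
set_option maxHeartbeats 1000000

open Set Topology Filter

universe u

section Aux

set_option linter.unusedVariables false
set_option linter.unusedSectionVars false

variable {X : Type u} [AddCommGroup X] [Module ℝ X] [TopologicalSpace X]
  [IsTopologicalAddGroup X] [ContinuousSMul ℝ X]

-- Hahn-Banach dominated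
theorem aux_hb (p : Seminorm ℝ X) (x : X) :
    ∃ f : X →ₗ[ℝ] ℝ, (∀ y, |f y| ≤ p y) ∧ f x = p x := by
  rcases eq_or_ne x 0 with rfl | hx
  · exact ⟨0, fun y => by simp [apply_nonneg], by simp⟩
  · have H : ∀ c : ℝ, c • x = 0 → c • (p x : ℝ) = 0 := by
      intro c hc
      rcases smul_eq_zero.1 hc with rfl | h
      · simp
      · exact absurd h hx
    set g : X →ₗ.[ℝ] ℝ := LinearPMap.mkSpanSingleton' x (p x) H with hg
    obtain ⟨f, hf1, hf2⟩ := exists_extension_of_le_sublinear g p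
      (fun c hc y => by rw [map_smul_eq_mul, Real.norm_eq_abs, abs_of_pos hc])
      (fun y z => map_add_le_add p y z)
      (by
        rintro ⟨y, hy⟩
        obtain ⟨t, rfl⟩ : ∃ t : ℝ, t • x = y := Submodule.mem_span_singleton.1 hy
        have h1 : g ⟨t • x, hy⟩ = t • (p x : ℝ) :=
          LinearPMap.mkSpanSingleton'_apply x (p x) H t hy
        rw [h1]
        rcases le_or_gt 0 t with ht | ht
        · simp only [map_smul_eq_mul, Real.norm_eq_abs, abs_of_nonneg ht, smul_eq_mul, le_refl]
        · have : t • (p x : ℝ) ≤ 0 := by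
            have := apply_nonneg p x
            simp only [smul_eq_mul]
            nlinarith
          exact this.trans (apply_nonneg p _))
    have hx_mem : x ∈ g.domain := Submodule.mem_span_singleton_self x
    have hfx : f x = p x := by
      have h2 := hf1 ⟨x, hx_mem⟩
      have h3 : g ⟨x, hx_mem⟩ = p x := LinearPMap.mkSpanSingleton'_apply_self x (p x) H hx_mem
      simpa [h3] using h2
    refine ⟨f, fun y => ?_, hfx⟩
    have h1 := hf2 y
    have h2 := hf2 (-y)
    rw [map_neg, map_neg_eq_map] at h2
    rw [abs_le]
    exact ⟨by linarith, h1⟩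

theorem aux_cts (p : Seminorm ℝ X) (hp : Continuous p) (f : X →ₗ[ℝ] ℝ) (C : ℝ)
    (hf : ∀ y, |f y| ≤ C * p y) : Continuous f := by
  apply continuous_of_continuousAt_zero f.toAddMonoidHom
  have h0 : Tendsto (fun y : X => C * p y) (𝓝 0) (𝓝 0) := by
    have := (hp.tendsto 0).const_mul C
    simpa using this
  have : Tendsto (fun y : X => f y) (𝓝 0) (𝓝 0) :=
    squeeze_zero_norm (fun y => by simpa using hf y) h0
  simpa [ContinuousAt] using this

omit [TopologicalSpace X] [IsTopologicalAddGroup X] [ContinuousSMul ℝ X] in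
theorem aux_dualfam {ι : Type*} [Finite ι] {v : ι → X →ₗ[ℝ] ℝ}
    (hv : LinearIndependent ℝ v) (i : ι) :
    ∃ χ : X, v i χ = 1 ∧ ∀ j, j ≠ i → v j χ = 0 := by
  by_cases h : ∃ χ : X, (∀ j, j ≠ i → v j χ = 0) ∧ v i χ ≠ 0
  · obtain ⟨χ, hχ0, hχ⟩ := h
    refine ⟨(v i χ)⁻¹ • χ, ?_, fun j hj => ?_⟩
    · simp [inv_mul_cancel₀ hχ]
    · simp [hχ0 j hj]
  · push_neg at h
    exfalso
    have hker : ⨅ j : {j : ι // j ≠ i}, LinearMap.ker (v j.1) ≤ LinearMap.ker (v i) := by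
      intro χ hχ
      simp only [Submodule.mem_iInf, LinearMap.mem_ker] at hχ ⊢
      exact h χ (fun j hj => hχ ⟨j, hj⟩)
    have hmem := mem_span_of_iInf_ker_le_ker hker
    have : v i ∈ Submodule.span ℝ (v '' {j | j ≠ i}) := by
      have hrange : range (fun j : {j : ι // j ≠ i} => v j.1) = v '' {j | j ≠ i} := by
        ext g; constructor
        · rintro ⟨⟨j, hj⟩, rfl⟩; exact ⟨j, hj, rfl⟩
        · rintro ⟨j, hj, rfl⟩; exact ⟨⟨j, hj⟩, rfl⟩
      rwa [hrange] at hmem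
    exact hv.notMem_span_image (by simp : i ∉ {j | j ≠ i}) this

theorem aux_weak_eval_cts (f : X →L[ℝ] ℝ) :
    Continuous fun x : WeakSpace ℝ X => f x :=
  WeakBilin.eval_continuous ((topDualPairing ℝ X).flip) f

theorem aux_weak_basic_mem (s : Finset (X →L[ℝ] ℝ)) {δ : ℝ} (hδ : 0 < δ) :
    {x : WeakSpace ℝ X | ∀ f ∈ s, |f x| < δ} ∈ 𝓝 (0 : WeakSpace ℝ X) := by
  have hopen : IsOpen {x : WeakSpace ℝ X | ∀ f ∈ s, |f x| < δ} := by
    have : {x : WeakSpace ℝ X | ∀ f ∈ s, |f x| < δ} =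
        ⋂ f ∈ s, {x : WeakSpace ℝ X | |f x| < δ} := by
      ext x; simp
    rw [this]
    refine isOpen_biInter_finset fun f _ => ?_
    have : Continuous fun x : WeakSpace ℝ X => |f x| :=
      (aux_weak_eval_cts f).abs
    exact isOpen_lt this continuous_const
  refine hopen.mem_nhds ?_
  simp only [mem_setOf_eq]
  intro f _
  have : f (0 : X) = 0 := map_zero f
  exact (show |f (0:X)| < δ by rw [this]; simpa using hδ)

theorem aux_weak_mem_nhds {U : Set (WeakSpace ℝ X)} (hU : U ∈ 𝓝 (0 : WeakSpace ℝ X)) :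
    ∃ (s : Finset (X →L[ℝ] ℝ)) (δ : ℝ), 0 < δ ∧
      {x : WeakSpace ℝ X | ∀ f ∈ s, |f x| < δ} ⊆ U := by
  set F : X → ((X →L[ℝ] ℝ) → ℝ) := fun x f => f x with hF
  have hnhds : 𝓝 (0 : WeakSpace ℝ X) = Filter.comap F (𝓝 (F 0)) := nhds_induced _ _
  have hF0 : F 0 = 0 := funext fun f => map_zero f
  rw [hnhds] at hU
  obtain ⟨t, ht, htU⟩ := Filter.mem_comap.1 hU
  rw [hF0, nhds_pi] at ht
  obtain ⟨I, hIfin, W, hW, hWt⟩ := Filter.mem_pi.1 ht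
  choose ε hε hball using fun f => Metric.mem_nhds_iff.1 (hW f)
  classical
  set s : Finset (X →L[ℝ] ℝ) := hIfin.toFinset with hs
  set δs : Finset ℝ := insert (1:ℝ) (s.image ε) with hδs
  have hδs_ne : δs.Nonempty := ⟨1, Finset.mem_insert_self _ _⟩
  set δ : ℝ := δs.min' hδs_ne with hδdef
  have hδpos : 0 < δ := by
    apply lt_of_lt_of_le _ (le_refl δ)
    have := Finset.min'_mem δs hδs_ne
    rw [← hδdef] at this
    rcases Finset.mem_insert.1 this with h1 | h2
    · rw [h1]; norm_num
    · obtain ⟨f, _, hf⟩ := Finset.mem_image.1 h2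
      rw [← hf]; exact hε f
  refine ⟨s, δ, hδpos, ?_⟩
  intro x hx
  apply htU
  show F x ∈ t
  apply hWt
  intro f hfI
  have hfs : f ∈ s := hIfin.mem_toFinset.2 hfI
  have hδle : δ ≤ ε f :=
    Finset.min'_le _ _ (Finset.mem_insert_of_mem (Finset.mem_image_of_mem ε hfs))
  have : |f x| < ε f := lt_of_lt_of_le (hx f hfs) hδle
  have hmem : F x f ∈ Metric.ball (0:ℝ) (ε f) := by
    simpa [Real.dist_eq, hF] using this
  exact hball f hmem

/-- A continuous seminorm is bounded on any set on which all continuous linear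
functionals are bounded (elementary gliding-hump form of Mackey's theorem). -/
theorem aux_sokal (p : Seminorm ℝ X) (hp : Continuous p) {Q : Set X}
    (hQ : ∀ f : X →L[ℝ] ℝ, ∃ C, ∀ x ∈ Q, |f x| ≤ C) :
    ∃ C, ∀ x ∈ Q, p x ≤ C := by
  by_contra hcon
  push_neg at hcon
  have hch : ∀ k : ℕ, ∃ x ∈ Q, 12 * 4 ^ k * (k + 1) < p x := fun k => hcon _
  choose x hxQ hxp using hch
  choose f hfb hfx using fun k => aux_hb p (x k)
  -- recursive partial sums with signs
  let step : ℕ → (X →ₗ[ℝ] ℝ) → (X →ₗ[ℝ] ℝ) := fun k S =>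
    S + ((if 0 ≤ S (x k) * f k (x k) then ((4:ℝ)⁻¹)^k else -(((4:ℝ)⁻¹)^k)) • f k)
  let S : ℕ → (X →ₗ[ℝ] ℝ) := fun k => Nat.rec (0 : X →ₗ[ℝ] ℝ) step k
  let c : ℕ → ℝ := fun k =>
    if 0 ≤ S k (x k) * f k (x k) then ((4:ℝ)⁻¹)^k else -(((4:ℝ)⁻¹)^k)
  have hS_succ : ∀ k, S (k+1) = S k + c k • f k := fun k => rfl
  have hq_pos : ∀ k, (0:ℝ) < ((4:ℝ)⁻¹)^k := fun k => by positivity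
  have hc_abs : ∀ k, |c k| = ((4:ℝ)⁻¹)^k := by
    intro k
    by_cases h : 0 ≤ S k (x k) * f k (x k) <;>
      simp [c, h, abs_of_pos (hq_pos k), abs_of_neg (neg_neg_iff_pos.2 (hq_pos k))]
  -- summability
  have hbound : ∀ y k, |c k * f k y| ≤ ((4:ℝ)⁻¹)^k * p y := by
    intro y k
    rw [abs_mul, hc_abs k]
    exact mul_le_mul_of_nonneg_left (hfb k y) (hq_pos k).le
  have hgeom : Summable fun k : ℕ => ((4:ℝ)⁻¹)^k :=
    summable_geometric_of_lt_one (by norm_num) (by norm_num)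
  have hsum : ∀ y, Summable fun k => c k * f k y := by
    intro y
    apply Summable.of_norm_bounded (hgeom.mul_right (p y))
    intro k
    rw [Real.norm_eq_abs]
    exact hbound y k
  -- the limit functional
  set h : X → ℝ := fun y => ∑' k, c k * f k y with hh
  have hadd : ∀ y z, h (y + z) = h y + h z := by
    intro y z
    have : (fun k => c k * f k (y + z)) = fun k => c k * f k y + c k * f k z := by
      funext k; rw [map_add]; ring
    rw [hh]
    simp only [this]
    exact Summable.tsum_add (hsum y) (hsum z)
  have hsmul : ∀ (r : ℝ) (y : X), h (r • y) = r * h y := by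
    intro r y
    have : (fun k => c k * f k (r • y)) = fun k => r * (c k * f k y) := by
      funext k; rw [map_smul]; simp [smul_eq_mul]; ring
    rw [hh]
    simp only [this]
    exact tsum_mul_left
  let hl : X →ₗ[ℝ] ℝ :=
    { toFun := h
      map_add' := hadd
      map_smul' := hsmul }
  have htsum_geom : ∑' k : ℕ, ((4:ℝ)⁻¹)^k = 4/3 := by
    rw [tsum_geometric_of_lt_one (by norm_num) (by norm_num)]
    norm_num
  have hl_bound : ∀ y, |hl y| ≤ 2 * p y := by
    intro y
    have hsnorm : Summable fun k => ‖c k * f k y‖ := by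
      apply Summable.of_nonneg_of_le (fun k => norm_nonneg _) (fun k => ?_) (hgeom.mul_right (p y))
      rw [Real.norm_eq_abs]; exact hbound y k
    have h1 : ‖∑' k, c k * f k y‖ ≤ ∑' k, ‖c k * f k y‖ := norm_tsum_le_tsum_norm hsnorm
    have h2 : ∑' k, ‖c k * f k y‖ ≤ ∑' k, ((4:ℝ)⁻¹)^k * p y := by
      apply Summable.tsum_le_tsum _ hsnorm (hgeom.mul_right (p y))
      intro k
      rw [Real.norm_eq_abs]; exact hbound y k
    have h3 : ∑' k, ((4:ℝ)⁻¹)^k * p y = (4/3) * p y := by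
      rw [tsum_mul_right, htsum_geom]
    have hpy : 0 ≤ p y := apply_nonneg p y
    have : |hl y| ≤ (4/3) * p y := by
      rw [← h3]
      calc |hl y| = ‖∑' k, c k * f k y‖ := by rw [Real.norm_eq_abs]; rfl
        _ ≤ _ := h1.trans h2
    nlinarith
  have hl_cts : Continuous hl := aux_cts p hp hl 2 hl_bound
  obtain ⟨C, hC⟩ := hQ ⟨hl, hl_cts⟩
  -- partial sums formula
  have hSsum : ∀ k y, S k y = ∑ j ∈ Finset.range k, c j * f j y := by
    intro k
    induction k with
    | zero => intro y; simp [S]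
    | succ n ih =>
      intro y
      rw [hS_succ n]
      simp only [LinearMap.add_apply, LinearMap.smul_apply, smul_eq_mul]
      rw [ih y, Finset.sum_range_succ]
  -- sign property
  have hkey : ∀ k, ((4:ℝ)⁻¹)^k * p (x k) ≤ |S (k+1) (x k)| := by
    intro k
    have hfk : f k (x k) = p (x k) := hfx k
    have hb0 : 0 ≤ p (x k) := apply_nonneg p _
    have hq := hq_pos k
    have hS1 : S (k+1) (x k) = S k (x k) + c k * f k (x k) := by
      rw [hS_succ k]; simp
    by_cases hab : 0 ≤ S k (x k) * f k (x k)
    · have hc : c k = ((4:ℝ)⁻¹)^k := if_pos hab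
      rw [hS1, hc, hfk]
      rw [hfk] at hab
      rcases abs_cases (S k (x k) + ((4:ℝ)⁻¹)^k * p (x k)) with ⟨he, hsign⟩ | ⟨he, hsign⟩ <;>
        rw [he] <;> nlinarith
    · have hc : c k = -(((4:ℝ)⁻¹)^k) := if_neg hab
      push_neg at hab
      rw [hS1, hc, hfk]
      rw [hfk] at hab
      have ha : S k (x k) < 0 := by nlinarith
      rcases abs_cases (S k (x k) + -(((4:ℝ)⁻¹)^k) * p (x k)) with ⟨he, hsign⟩ | ⟨he, hsign⟩ <;>
        rw [he] <;> nlinarith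
  -- tail estimate and conclusion
  have hmain : ∀ k : ℕ, (k:ℝ) ≤ |hl (x k)| := by
    intro k
    have hsplit := Summable.sum_add_tsum_nat_add (f := fun j => c j * f j (x k)) (k+1) (hsum (x k))
    have hS1 : S (k+1) (x k) = ∑ j ∈ Finset.range (k+1), c j * f j (x k) := hSsum (k+1) (x k)
    have hgeom_tail : Summable fun j : ℕ => ((4:ℝ)⁻¹)^(j + (k+1)) * p (x k) := by
      have : (fun j : ℕ => ((4:ℝ)⁻¹)^(j + (k+1)) * p (x k))
          = fun j : ℕ => ((4:ℝ)⁻¹)^j * (((4:ℝ)⁻¹)^(k+1) * p (x k)) := by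
        funext j; rw [pow_add]; ring
      rw [this]
      exact hgeom.mul_right _
    have hsum_tail : Summable fun j => c (j + (k+1)) * f (j + (k+1)) (x k) := by
      apply Summable.of_norm_bounded hgeom_tail
      intro j
      rw [Real.norm_eq_abs]; exact hbound (x k) (j + (k+1))
    have htail : |∑' j, c (j + (k+1)) * f (j + (k+1)) (x k)| ≤ (1/3) * ((4:ℝ)⁻¹)^k * p (x k) := by
      have hsnorm : Summable fun j => ‖c (j + (k+1)) * f (j + (k+1)) (x k)‖ := by
        apply Summable.of_nonneg_of_le (fun j => norm_nonneg _) (fun j => ?_) hgeom_tail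
        rw [Real.norm_eq_abs]; exact hbound (x k) (j + (k+1))
      have h1 : ‖∑' j, c (j + (k+1)) * f (j + (k+1)) (x k)‖
          ≤ ∑' j, ‖c (j + (k+1)) * f (j + (k+1)) (x k)‖ := norm_tsum_le_tsum_norm hsnorm
      have h2 : ∑' j, ‖c (j + (k+1)) * f (j + (k+1)) (x k)‖
          ≤ ∑' j, ((4:ℝ)⁻¹)^(j + (k+1)) * p (x k) := by
        apply Summable.tsum_le_tsum _ hsnorm hgeom_tail
        intro j
        rw [Real.norm_eq_abs]; exact hbound (x k) (j + (k+1))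
      have h3 : ∑' j : ℕ, ((4:ℝ)⁻¹)^(j + (k+1)) * p (x k)
          = (1/3) * ((4:ℝ)⁻¹)^k * p (x k) := by
        have he : (fun j : ℕ => ((4:ℝ)⁻¹)^(j + (k+1)) * p (x k))
            = fun j : ℕ => ((4:ℝ)⁻¹)^j * (((4:ℝ)⁻¹)^(k+1) * p (x k)) := by
          funext j; rw [pow_add]; ring
        rw [he, tsum_mul_right, htsum_geom, pow_succ]
        ring
      rw [Real.norm_eq_abs] at h1
      linarith [h1, h2, h3.le, h3.ge]
    have hhx : hl (x k) = S (k+1) (x k) + ∑' j, c (j + (k+1)) * f (j + (k+1)) (x k) := by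
      have : (hl (x k) : ℝ) = ∑' j, c j * f j (x k) := rfl
      rw [this, hS1, ← hsplit]
    have hq4 : ((4:ℝ)⁻¹)^k * (4:ℝ)^k = 1 := by
      rw [← mul_pow]; norm_num
    have hS1abs : ((4:ℝ)⁻¹)^k * p (x k) ≤ |S (k+1) (x k)| := hkey k
    have habs : |S (k+1) (x k)| - |∑' j, c (j + (k+1)) * f (j + (k+1)) (x k)| ≤ |hl (x k)| := by
      rw [hhx]
      have h7 := abs_sub_abs_le_abs_sub (S (k+1) (x k))
        (-(∑' j, c (j + (k+1)) * f (j + (k+1)) (x k)))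
      simpa [sub_neg_eq_add] using h7
    have hpk : 12 * 4 ^ k * ((k:ℝ) + 1) < p (x k) := hxp k
    have hqk : (0:ℝ) < ((4:ℝ)⁻¹)^k := hq_pos k
    have h5 : ((4:ℝ)⁻¹)^k * (12 * 4 ^ k * ((k:ℝ) + 1)) = 12 * ((k:ℝ) + 1) := by
      have : ((4:ℝ)⁻¹)^k * (12 * 4 ^ k * ((k:ℝ) + 1))
          = 12 * (((4:ℝ)⁻¹)^k * (4:ℝ)^k) * ((k:ℝ) + 1) := by ring
      rw [this, hq4]; ring
    have h6 : 12 * ((k:ℝ) + 1) < ((4:ℝ)⁻¹)^k * p (x k) := by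
      rw [← h5]
      exact mul_lt_mul_of_pos_left hpk hqk
    linarith
  obtain ⟨k, hk⟩ := exists_nat_gt C
  have h1 := hmain k
  have h2 : |hl (x k)| ≤ C := by simpa using hC (x k) (hxQ k)
  linarith

theorem aux_step1 [LocallyConvexSpace ℝ X] (hAsc : IsAscoli (WeakSpace ℝ X))
    {U : Set X} (hU : U ∈ 𝓝 (0 : X)) : U ∈ 𝓝 (0 : WeakSpace ℝ X) := by
  classical
  obtain ⟨V, ⟨hV0, hVopen, hVbal, hVconv⟩, hVU⟩ :=
    (nhds_hasBasis_absConvex_open ℝ X).mem_iff.1 hU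
  have hVnhds : V ∈ 𝓝 (0 : X) := hVopen.mem_nhds hV0
  set p : Seminorm ℝ X := gaugeSeminorm hVbal hVconv (absorbent_nhds_zero hVnhds) with hp_def
  have hp_cts : Continuous p := by
    have h1 : Continuous (gauge V) := continuous_gauge hVconv hVnhds
    have h2 : (p : X → ℝ) = gauge V := by
      funext z; exact gaugeSeminorm_toFun _ _ _ z
    rw [h2]; exact h1
  have hpV : {x : X | p x < 1} = V :=
    calc {x : X | p x < 1} = p.ball 0 1 := (Seminorm.ball_zero_eq _).symm
      _ = V := gaugeSeminormFamily_ball ⟨V, hV0, hVopen, hVbal, hVconv⟩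
  -- the "polar" set of functionals dominated by p
  set D : Set (X →L[ℝ] ℝ) := {f | ∀ y, |f y| ≤ p y} with hD_def
  have hD_norming : ∀ x : X, ∃ f ∈ D, f x = p x := by
    intro x
    obtain ⟨f, hf1, hf2⟩ := aux_hb p x
    exact ⟨⟨f, aux_cts p hp_cts f 1 (fun y => by simpa using hf1 y)⟩, hf1, hf2⟩
  obtain ⟨B, hBD, hBspan, hBli⟩ := exists_linearIndependent ℝ D
  by_cases hBfin : B.Finite
  · -- Case 1 : B finite; p is dominated by finitely many functionals, hence U is a weak nbhd
    have : Finite ↥B := hBfin.to_subtype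
    have : Fintype ↥B := Fintype.ofFinite ↥B
    -- linear independence as plain linear maps
    have hBli' : LinearIndependent ℝ (fun b : ↥B => ((b : X →L[ℝ] ℝ) : X →ₗ[ℝ] ℝ)) := by
      have := hBli.map' (ContinuousLinearMap.coeLM ℝ (M := X) (N₃ := ℝ))
        (LinearMap.ker_eq_bot.2 ContinuousLinearMap.coe_injective)
      exact this
    -- dual family
    have hdual : ∀ b : ↥B, ∃ χ : X,
        ((b : X →L[ℝ] ℝ) : X →ₗ[ℝ] ℝ) χ = 1 ∧
        ∀ j : ↥B, j ≠ b → ((j : X →L[ℝ] ℝ) : X →ₗ[ℝ] ℝ) χ = 0 :=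
      fun b => aux_dualfam hBli' b
    choose χ hχ1 hχ0 using hdual
    -- coefficient bound : every f in D satisfies |f y| ≤ ∑ p(χ b) |b y|
    have hcoef : ∀ f ∈ D, ∀ y : X, f y ≤ ∑ b : ↥B, p (χ b) * |(b : X →L[ℝ] ℝ) y| := by
      intro f hfD y
      have hfmem : f ∈ Submodule.span ℝ (range (fun b : ↥B => (b : X →L[ℝ] ℝ))) := by
        rw [Subtype.range_coe]
        rw [hBspan]
        exact Submodule.subset_span hfD
      obtain ⟨c, hc⟩ := (Submodule.mem_span_range_iff_exists_fun ℝ).1 hfmem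
      have hcval : ∀ b : ↥B, c b = f (χ b) := by
        intro b
        have := congrArg (fun (g : X →L[ℝ] ℝ) => g (χ b)) hc
        rw [← this]
        rw [ContinuousLinearMap.coe_sum', Finset.sum_apply]
        simp only [ContinuousLinearMap.coe_smul', Pi.smul_apply, smul_eq_mul]
        rw [Finset.sum_eq_single b]
        · rw [show ((b : X →L[ℝ] ℝ) (χ b)) = 1 from hχ1 b]; ring
        · intro j _ hj
          rw [show ((j : X →L[ℝ] ℝ) (χ b)) = 0 from hχ0 b j hj]; ring
        · intro hb; exact absurd (Finset.mem_univ b) hb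
      have hcbound : ∀ b : ↥B, |c b| ≤ p (χ b) := by
        intro b
        rw [hcval b]
        exact hfD (χ b)
      have hfy : f y = ∑ b : ↥B, c b * (b : X →L[ℝ] ℝ) y := by
        have := congrArg (fun (g : X →L[ℝ] ℝ) => g y) hc
        rw [← this]
        rw [ContinuousLinearMap.coe_sum', Finset.sum_apply]
        simp only [ContinuousLinearMap.coe_smul', Pi.smul_apply, smul_eq_mul]
      rw [hfy]
      calc ∑ b : ↥B, c b * (b : X →L[ℝ] ℝ) y
          ≤ ∑ b : ↥B, |c b * (b : X →L[ℝ] ℝ) y| := Finset.sum_le_sum fun b _ => le_abs_self _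
        _ ≤ ∑ b : ↥B, p (χ b) * |(b : X →L[ℝ] ℝ) y| := by
            apply Finset.sum_le_sum
            intro b _
            rw [abs_mul]
            exact mul_le_mul_of_nonneg_right (hcbound b) (abs_nonneg _)
    -- p is dominated by the weakly continuous function
    have hpdom : ∀ y : X, p y ≤ ∑ b : ↥B, p (χ b) * |(b : X →L[ℝ] ℝ) y| := by
      intro y
      obtain ⟨f, hfD, hfy⟩ := hD_norming y
      rw [← hfy]
      exact hcoef f hfD y
    -- the weak neighborhood
    set T : Set (WeakSpace ℝ X) :=
      {x : WeakSpace ℝ X | ∑ b : ↥B, p (χ b) * |(b : X →L[ℝ] ℝ) x| < 1} with hT_def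
    have hT_open : IsOpen T := by
      have hcts : Continuous fun x : WeakSpace ℝ X =>
          ∑ b : ↥B, p (χ b) * |(b : X →L[ℝ] ℝ) x| := by
        apply continuous_finset_sum
        intro b _
        exact continuous_const.mul (aux_weak_eval_cts (b : X →L[ℝ] ℝ)).abs
      exact isOpen_lt hcts continuous_const
    have hT0 : (0 : WeakSpace ℝ X) ∈ T := by
      have : ∀ b : ↥B, ((b : X →L[ℝ] ℝ) : X → ℝ) 0 = 0 := fun b => map_zero _
      simp only [hT_def, mem_setOf_eq]
      rw [Finset.sum_eq_zero (fun b _ => by simp only [mul_eq_zero, abs_eq_zero]; right; exact this b)]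
      norm_num
    have hTV : T ⊆ V := by
      intro x hx
      rw [← hpV]
      exact lt_of_le_of_lt (hpdom x) hx
    exact Filter.mem_of_superset (hT_open.mem_nhds hT0) (hTV.trans hVU)
  · -- Case 2 : B infinite; contradiction with the Ascoli property
    exfalso
    have hBinf : B.Infinite := hBfin
    set e : ℕ ↪ ↥B := hBinf.natEmbedding B with he_def
    set F : ℕ → X →L[ℝ] ℝ := fun n => ((e n : ↥B) : X →L[ℝ] ℝ) with hF_def
    have hFD : ∀ n, F n ∈ D := fun n => hBD (e n).2
    have hFp : ∀ n y, |F n y| ≤ p y := fun n y => hFD n y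
    set g : ℕ → X →L[ℝ] ℝ := fun n => (((n : ℝ) + 1)⁻¹) • F n with hg_def
    have hnpos : ∀ n : ℕ, (0:ℝ) < (n:ℝ) + 1 := fun n => by positivity
    have hg_apply : ∀ n (y : X), g n y = (((n : ℝ) + 1)⁻¹) * F n y := fun n y => rfl
    set φ : ℕ → C(WeakSpace ℝ X, ℝ) := fun n => ⟨fun x => g n x, aux_weak_eval_cts (g n)⟩
      with hφ_def
    have hφ_tendsto : Tendsto φ atTop (𝓝 (0 : C(WeakSpace ℝ X, ℝ))) := by
      rw [ContinuousMap.tendsto_iff_forall_isCompact_tendstoUniformlyOn]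
      intro Q hQ
      have hQb : ∀ f : X →L[ℝ] ℝ, ∃ C, ∀ x ∈ Q, |f x| ≤ C := by
        intro f
        obtain ⟨C, hC⟩ := hQ.exists_bound_of_continuousOn ((aux_weak_eval_cts f).continuousOn)
        exact ⟨C, fun x hx => by simpa using hC x hx⟩
      obtain ⟨Cq, hCq⟩ := aux_sokal p hp_cts (Q := show Set X from Q) hQb
      rw [Metric.tendstoUniformlyOn_iff]
      intro ε hε
      obtain ⟨N, hN⟩ := exists_nat_gt (Cq / ε)
      rw [eventually_atTop]
      refine ⟨N, fun n hn x hx => ?_⟩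
      have hb1 : |g n x| ≤ Cq / ((n:ℝ) + 1) := by
        rw [hg_apply n x, abs_mul, abs_inv]
        rw [abs_of_pos (hnpos n), div_eq_inv_mul]
        apply mul_le_mul_of_nonneg_left _ (by positivity)
        exact (hFp n x).trans (hCq x hx)
      have hb2 : Cq / ((n:ℝ) + 1) < ε := by
        rw [div_lt_iff₀ (hnpos n)]
        have h3 : Cq < ε * (N:ℝ) := by
          rcases le_or_gt ε 0 with h | h
          · exact absurd h (not_le.2 hε)
          · calc Cq = (Cq / ε) * ε := by field_simp
              _ < (N:ℝ) * ε := by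
                  apply mul_lt_mul_of_pos_right hN hε
              _ = ε * (N:ℝ) := by ring
        calc Cq < ε * (N:ℝ) := h3
          _ ≤ ε * ((n:ℝ) + 1) := by
              apply mul_le_mul_of_nonneg_left _ hε.le
              have : (N:ℝ) ≤ (n:ℝ) := by exact_mod_cast hn
              linarith
      have : dist ((0 : C(WeakSpace ℝ X, ℝ)) x) (φ n x) = |g n x| := by
        simp only [ContinuousMap.zero_apply, Real.dist_eq]
        rw [hφ_def]
        simp [abs_sub_comm]
      rw [this]
      exact lt_of_le_of_lt hb1 hb2
    set K : Set C(WeakSpace ℝ X, ℝ) := insert 0 (range φ) with hK_def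
    have hK_cpt : IsCompact K := hφ_tendsto.isCompact_insert_range
    have hEq : Equicontinuous fun f : K => ((f : C(WeakSpace ℝ X, ℝ)) : WeakSpace ℝ X → ℝ) :=
      hAsc K hK_cpt
    have hEq0 := Metric.equicontinuousAt_iff_right.1 (hEq (0 : WeakSpace ℝ X)) 1 one_pos
    obtain ⟨s, δ, hδ, hsub⟩ := aux_weak_mem_nhds hEq0
    -- every F n vanishes on the common kernel of s
    have hvanish : ∀ n (y : X), (∀ ψ ∈ s, ψ y = 0) → F n y = 0 := by
      intro n y hy
      have hgn : ∀ t : ℝ, |t| * |g n y| < 1 := by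
        intro t
        have hmem : (t • y : WeakSpace ℝ X) ∈ {x : WeakSpace ℝ X | ∀ f ∈ s, |f x| < δ} := by
          intro ψ hψ
          have : ψ (t • y) = t * ψ y := by rw [map_smul]; rfl
          rw [this, hy ψ hψ, mul_zero, abs_zero]
          exact hδ
        have h2 := hsub hmem ⟨φ n, mem_insert_of_mem _ ⟨n, rfl⟩⟩
        have h0 : (φ n) (0 : WeakSpace ℝ X) = 0 := map_zero (g n)
        rw [h0] at h2
        have h3 : (φ n) (t • y : WeakSpace ℝ X) = g n (t • y) := rfl
        rw [Real.dist_eq, h3] at h2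
        have h4 : g n (t • y) = t * g n y := by rw [map_smul]; rfl
        rw [h4] at h2
        calc |t| * |g n y| = |0 - t * g n y| := by rw [zero_sub, abs_neg, abs_mul]
          _ < 1 := h2
      have hgn0 : g n y = 0 := by
        by_contra hne
        have habs : 0 < |g n y| := abs_pos.2 hne
        have := hgn (2 / |g n y|)
        rw [abs_div, abs_two, abs_abs, div_mul_cancel₀] at this
        · linarith
        · exact habs.ne'
      have : (((n:ℝ) + 1)⁻¹) * F n y = 0 := by rw [← hg_apply n y]; exact hgn0
      have hinv : ((n:ℝ) + 1)⁻¹ ≠ 0 := by positivity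
      exact (mul_eq_zero.1 this).resolve_left hinv
    -- hence each F n is in the span of s, a finite-dimensional space
    classical
    set L : ↥(s : Finset (X →L[ℝ] ℝ)) → X →ₗ[ℝ] ℝ :=
      fun ψ => ((ψ : X →L[ℝ] ℝ) : X →ₗ[ℝ] ℝ) with hL_def
    have hker : ∀ n, ⨅ ψ : ↥(s : Finset (X →L[ℝ] ℝ)), LinearMap.ker (L ψ) ≤
        LinearMap.ker ((F n : X →L[ℝ] ℝ) : X →ₗ[ℝ] ℝ) := by
      intro n y hy
      simp only [Submodule.mem_iInf, LinearMap.mem_ker] at hy ⊢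
      apply hvanish n y
      intro ψ hψ
      exact hy ⟨ψ, hψ⟩
    have hmem : ∀ n, ((F n : X →L[ℝ] ℝ) : X →ₗ[ℝ] ℝ) ∈
        Submodule.span ℝ (range L) := fun n => mem_span_of_iInf_ker_le_ker (hker n)
    have hfd : FiniteDimensional ℝ (Submodule.span ℝ (range L)) :=
      FiniteDimensional.span_of_finite ℝ (finite_range L)
    have hFli : LinearIndependent ℝ (fun n => ((F n : X →L[ℝ] ℝ) : X →ₗ[ℝ] ℝ)) := by
      have h1 : LinearIndependent ℝ (fun n : ℕ => ((e n : ↥B) : X →L[ℝ] ℝ)) :=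
        hBli.comp e e.injective
      exact h1.map' (ContinuousLinearMap.coeLM ℝ (M := X) (N₃ := ℝ))
        (LinearMap.ker_eq_bot.2 ContinuousLinearMap.coe_injective)
    set v' : ℕ → ↥(Submodule.span ℝ (range L)) := fun n => ⟨_, hmem n⟩ with hv'_def
    have hv'li : LinearIndependent ℝ v' := by
      apply LinearIndependent.of_comp (Submodule.span ℝ (range L)).subtype
      exact hFli
    have : Finite ℕ := hv'li.finite
    exact @not_finite ℕ _ this

theorem aux_topeq [LocallyConvexSpace ℝ X] (hAsc : IsAscoli (WeakSpace ℝ X)) :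
    (‹TopologicalSpace X› : TopologicalSpace X)
      = (inferInstance : TopologicalSpace (WeakSpace ℝ X)) := by
  have tg1 : @IsTopologicalAddGroup X ‹TopologicalSpace X› _ := inferInstance
  have tg2 : @IsTopologicalAddGroup X (inferInstance :
      TopologicalSpace (WeakSpace ℝ X)) _ :=
    WeakSpace.instIsTopologicalAddGroup
  apply IsTopologicalAddGroup.ext tg1 tg2
  apply le_antisymm
  · -- original nhds ≤ weak nhds : identity X → WeakSpace is continuous
    have hcts : @Continuous X (WeakSpace ℝ X) ‹TopologicalSpace X›
        (inferInstance : TopologicalSpace (WeakSpace ℝ X)) id := by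
      apply WeakBilin.continuous_of_continuous_eval
      intro y
      exact y.continuous
    have h2 := hcts.tendsto 0
    exact h2
  · -- weak nhds ≤ original nhds : aux_step1
    intro U hU
    exact aux_step1 hAsc hU

end Aux

/-- If a `c₀`-barrelled Hausdorff real locally convex space `X` is weakly Ascoli, then `X` is
linearly homeomorphic to a dense subspace of a product `ℝ^Γ`. -/
theorem statement8 {X : Type u} [AddCommGroup X] [Module ℝ X] [TopologicalSpace X]
    [IsTopologicalAddGroup X] [ContinuousSMul ℝ X] [LocallyConvexSpace ℝ X] [T2Space X]
    (hc0 : C0Barrelled X) (hAsc : IsAscoli (WeakSpace ℝ X)) :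
    ∃ (Γ : Type u) (e : X →ₗ[ℝ] (Γ → ℝ)),
      Function.Injective e ∧ Continuous e ∧ IsEmbedding e ∧ DenseRange e := by
  classical
  set ι : Set (X →L[ℝ] ℝ) := Module.Basis.ofVectorSpaceIndex ℝ (X →L[ℝ] ℝ) with hι_def
  have hspan : Submodule.span ℝ ι = ⊤ := by
    have h1 := Module.Basis.span_eq (Module.Basis.ofVectorSpace ℝ (X →L[ℝ] ℝ))
    rwa [Module.Basis.range_ofVectorSpace] at h1
  have hli : LinearIndependent ℝ ((↑) : ↥ι → X →L[ℝ] ℝ) := by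
    have h1 := (Module.Basis.ofVectorSpace ℝ (X →L[ℝ] ℝ)).linearIndependent
    have h2 : ⇑(Module.Basis.ofVectorSpace ℝ (X →L[ℝ] ℝ)) = ((↑) : ↥ι → X →L[ℝ] ℝ) := by
      funext b; exact Module.Basis.ofVectorSpace_apply_self ℝ _ b
    rwa [h2] at h1
  set e : X →ₗ[ℝ] (↥ι → ℝ) :=
    LinearMap.pi (fun b : ↥ι => ((b : X →L[ℝ] ℝ) : X →ₗ[ℝ] ℝ)) with he_def
  have he_apply : ∀ (x : X) (b : ↥ι), e x b = (b : X →L[ℝ] ℝ) x := fun x b => rfl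
  -- (1) injectivity
  have hinj : Function.Injective e := by
    have hker : ∀ x : X, e x = 0 → x = 0 := by
      intro x hx
      by_contra hx0
      obtain ⟨f, hf⟩ := SeparatingDual.exists_ne_zero (R := ℝ) hx0
      have hall : ∀ g : X →L[ℝ] ℝ, g ∈ Submodule.span ℝ ι → g x = 0 := by
        intro g hg
        induction hg using Submodule.span_induction with
        | mem g hgι =>
            have := congrFun hx ⟨g, hgι⟩
            simpa [he_apply] using this
        | zero => simp
        | add g h _ _ hg hh => simp [hg, hh]
        | smul r g _ hg => simp [hg]
      exact hf (hall f (hspan ▸ Submodule.mem_top))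
    intro a b hab
    have : e (a - b) = 0 := by rw [map_sub, hab, sub_self]
    exact sub_eq_zero.1 (hker _ this)
  -- (2) continuity (for the original topology)
  have hcts : Continuous e := by
    have : ⇑e = fun (x : X) (b : ↥ι) => (b : X →L[ℝ] ℝ) x := rfl
    rw [this]
    exact continuous_pi fun b => (b : X →L[ℝ] ℝ).continuous
  -- (3) embedding : the topology of X is the weak topology, which is induced by e
  have htopeq := aux_topeq (X := X) hAsc
  have hinduced : (‹TopologicalSpace X› : TopologicalSpace X)
      = TopologicalSpace.induced (⇑e) Pi.topologicalSpace := by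
    refine htopeq.trans ?_
    show TopologicalSpace.induced (fun (x : X) (f : X →L[ℝ] ℝ) => f x) Pi.topologicalSpace
        = TopologicalSpace.induced (⇑e) Pi.topologicalSpace
    apply le_antisymm
    · -- weak ≤ induced e : restriction of coordinates
      have hrestr : Continuous (fun (v : (X →L[ℝ] ℝ) → ℝ) (b : ↥ι) => v ↑b) :=
        continuous_pi fun b => continuous_apply (b : X →L[ℝ] ℝ)
      have hcomp : (⇑e) = (fun (v : (X →L[ℝ] ℝ) → ℝ) (b : ↥ι) => v ↑b)
          ∘ (fun (x : X) (f : X →L[ℝ] ℝ) => f x) := rfl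
      calc TopologicalSpace.induced (fun (x : X) (f : X →L[ℝ] ℝ) => f x) Pi.topologicalSpace
          ≤ TopologicalSpace.induced (fun (x : X) (f : X →L[ℝ] ℝ) => f x)
            (TopologicalSpace.induced (fun (v : (X →L[ℝ] ℝ) → ℝ) (b : ↥ι) => v ↑b)
              Pi.topologicalSpace) :=
            induced_mono (continuous_iff_le_induced.1 hrestr)
        _ = TopologicalSpace.induced (⇑e) Pi.topologicalSpace := by
            rw [induced_compose, ← hcomp]
    · -- induced e ≤ weak : every functional is continuous for the e-induced topology
      have key : ∀ f : X →L[ℝ] ℝ, f ∈ Submodule.span ℝ ι →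
          @Continuous X ℝ (TopologicalSpace.induced (⇑e) Pi.topologicalSpace) _
            (fun x : X => f x) := by
        intro f hf
        induction hf using Submodule.span_induction with
        | mem g hgι =>
            have hco : (fun x : X => g x) = (fun v : ↥ι → ℝ => v ⟨g, hgι⟩) ∘ ⇑e := rfl
            rw [hco]
            letI : TopologicalSpace X := TopologicalSpace.induced (⇑e) Pi.topologicalSpace
            exact Continuous.comp (continuous_apply _) continuous_induced_dom
        | zero =>
            show @Continuous X ℝ (TopologicalSpace.induced (⇑e) Pi.topologicalSpace) _
              (fun _ : X => (0:ℝ))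
            letI : TopologicalSpace X := TopologicalSpace.induced (⇑e) Pi.topologicalSpace
            exact continuous_const
        | add g h _ _ hg hh =>
            show @Continuous X ℝ (TopologicalSpace.induced (⇑e) Pi.topologicalSpace) _
              (fun x : X => g x + h x)
            letI : TopologicalSpace X := TopologicalSpace.induced (⇑e) Pi.topologicalSpace
            exact Continuous.add hg hh
        | smul r g _ hg =>
            show @Continuous X ℝ (TopologicalSpace.induced (⇑e) Pi.topologicalSpace) _
              (fun x : X => r * g x)
            letI : TopologicalSpace X := TopologicalSpace.induced (⇑e) Pi.topologicalSpace
            exact Continuous.mul continuous_const hg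
      have hF : @Continuous X ((X →L[ℝ] ℝ) → ℝ)
          (TopologicalSpace.induced (⇑e) Pi.topologicalSpace) _
          (fun (x : X) (f : X →L[ℝ] ℝ) => f x) := by
        letI : TopologicalSpace X := TopologicalSpace.induced (⇑e) Pi.topologicalSpace
        exact continuous_pi fun f => key f (hspan ▸ Submodule.mem_top)
      exact continuous_iff_le_induced.1 hF
  have hemb : IsEmbedding ⇑e := ⟨⟨hinduced⟩, hinj⟩
  -- (4) dense range
  have hdense : DenseRange ⇑e := by
    intro y
    rw [mem_closure_iff_nhds]
    intro A hA
    rw [nhds_pi, Filter.mem_pi] at hA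
    obtain ⟨I, hIfin, W, hW, hWA⟩ := hA
    haveI : Finite ↥I := hIfin.to_subtype
    -- dual family for the finitely many basis functionals in I
    have hIli : LinearIndependent ℝ (fun b : ↥I => (((b : ↥ι) : X →L[ℝ] ℝ) : X →ₗ[ℝ] ℝ)) := by
      have h1 : LinearIndependent ℝ (fun b : ↥I => ((b : ↥ι) : X →L[ℝ] ℝ)) :=
        hli.comp (fun b : ↥I => (b : ↥ι)) Subtype.val_injective
      exact h1.map' (ContinuousLinearMap.coeLM ℝ (M := X) (N₃ := ℝ))
        (LinearMap.ker_eq_bot.2 ContinuousLinearMap.coe_injective)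
    have hdf := fun i => aux_dualfam hIli i
    choose χ hχ1 hχ0 using hdf
    haveI : Fintype ↥I := hIfin.fintype
    set x : X := ∑ b : ↥I, y (b : ↥ι) • χ b with hx_def
    have hx_coord : ∀ b : ↥I, e x (b : ↥ι) = y (b : ↥ι) := by
      intro b
      rw [he_apply, hx_def, map_sum]
      rw [Finset.sum_eq_single b]
      · rw [map_smul]
        have := hχ1 b
        simp only [ContinuousLinearMap.coe_coe] at this ⊢
        rw [show (((b : ↥ι) : X →L[ℝ] ℝ) : X → ℝ) (χ b) = 1 from this]
        simp
      · intro j _ hj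
        rw [map_smul]
        have := hχ0 j b (Ne.symm hj)
        simp only [ContinuousLinearMap.coe_coe] at this ⊢
        rw [show (((b : ↥ι) : X →L[ℝ] ℝ) : X → ℝ) (χ j) = 0 from this]
        simp
      · intro hb; exact absurd (Finset.mem_univ b) hb
    refine ⟨e x, hWA ?_, ⟨x, rfl⟩⟩
    intro b hb
    have : e x b = y b := hx_coord ⟨b, hb⟩
    rw [this]
    exact mem_of_mem_nhds (hW b)
  exact ⟨↥ι, e, hinj, hcts, hemb, hdense⟩
end

section
/- Let X be a Hausdorff real locally convex space that is weakly Ascoli. Then X is c₀-barrelled if and only if X is barrelled. -/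
open Set Topology Filter

section AuxLemmas

set_option linter.unusedSectionVars false
set_option maxHeartbeats 1000000

variable {X : Type*} [AddCommGroup X] [Module ℝ X] [TopologicalSpace X]
    [IsTopologicalAddGroup X] [ContinuousSMul ℝ X]

/-- A linear map dominated by a continuous seminorm is continuous. -/
lemma aux_cont_of_le (q : Seminorm ℝ X) (hq : Continuous ⇑q) {g : X → ℝ}
    (hadd : ∀ a b, g (a + b) = g a + g b) (hb : ∀ x, |g x| ≤ q x) : Continuous g := by
  rw [continuous_iff_continuousAt]
  intro x
  have hgsub : ∀ a b : X, g a - g b = g (a - b) := by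
    intro a b
    have := hadd (a - b) b
    simp at this
    linarith
  have h1 : Tendsto (fun y : X => q (y - x)) (𝓝 x) (𝓝 0) := by
    have h2 : Tendsto (fun y : X => y - x) (𝓝 x) (𝓝 (x - x)) :=
      (continuous_id.sub continuous_const).tendsto x
    simpa [Function.comp_def] using (hq.tendsto 0).comp (by simpa using h2)
  rw [ContinuousAt, tendsto_iff_dist_tendsto_zero]
  refine squeeze_zero (fun y => dist_nonneg) (fun y => ?_) h1
  rw [Real.dist_eq, hgsub]
  exact hb _

/-- Hahn-Banach for lower semicontinuous seminorms on locally convex spaces: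
values are approximated by dominated continuous linear functionals. -/
lemma aux_hb_s11 [LocallyConvexSpace ℝ X] (p : Seminorm ℝ X) (hp : LowerSemicontinuous ⇑p)
    (x₀ : X) (r : ℝ) (hr : r < p x₀) :
    ∃ g : X →L[ℝ] ℝ, (∀ x, |g x| ≤ p x) ∧ r < g x₀ := by
  set S : Set (X × ℝ) := {z | p z.1 ≤ z.2} with hS
  have hSmem : ∀ z : X × ℝ, z ∈ S ↔ p z.1 ≤ z.2 := fun z => Iff.rfl
  have hSconv : Convex ℝ S := by
    intro z hz w hw a b ha hb hab
    rw [hSmem] at *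
    calc p (a • z.1 + b • w.1) ≤ p (a • z.1) + p (b • w.1) := map_add_le_add _ _ _
      _ = a * p z.1 + b * p w.1 := by
          rw [map_smul_eq_mul, map_smul_eq_mul, Real.norm_eq_abs, Real.norm_eq_abs,
            abs_of_nonneg ha, abs_of_nonneg hb]
      _ ≤ a * z.2 + b * w.2 := by gcongr
  have hSclosed : IsClosed S := by
    rw [← isOpen_compl_iff, isOpen_iff_mem_nhds]
    rintro ⟨x, t⟩ hxt
    rw [mem_compl_iff, hSmem, not_le] at hxt
    obtain ⟨c, hc1, hc2⟩ := exists_between hxt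
    have h1 : {y : X | c < p y} ∈ 𝓝 x := hp x c hc2
    have h3 : {y : X | c < p y} ×ˢ Iio c ∈ 𝓝 (x, t) :=
      prod_mem_nhds h1 (Iio_mem_nhds hc1)
    refine mem_of_superset h3 ?_
    rintro ⟨y, s⟩ ⟨hy, hs⟩
    rw [mem_compl_iff, hSmem, not_le]
    exact lt_trans hs hy
  have hx₀S : (x₀, r) ∉ S := by rw [hSmem]; exact not_le.2 hr
  obtain ⟨f, u, hfS, hfx⟩ := geometric_hahn_banach_closed_point hSconv hSclosed hx₀S
  set fX : X →L[ℝ] ℝ := f.comp (ContinuousLinearMap.inl ℝ X ℝ) with hfX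
  set c : ℝ := f (0, 1) with hc
  have hdec : ∀ x t, f (x, t) = fX x + t * c := by
    intro x t
    have hsplit : (x, t) = (x, (0:ℝ)) + (t • ((0:X), (1:ℝ))) := by
      simp [Prod.ext_iff]
    rw [hsplit, map_add, map_smul]
    simp only [hfX, hc, ContinuousLinearMap.comp_apply, ContinuousLinearMap.inl_apply, smul_eq_mul]
  have hu0 : 0 < u := by
    have h0 := hfS (0, 0) (by rw [hSmem]; simp)
    rw [hdec] at h0
    simpa using h0
  have hbase : ∀ z : X, fX z + p z * c < u := by
    intro z
    have := hfS (z, p z) (by rw [hSmem])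
    rwa [hdec] at this
  have hcle : c ≤ 0 := by
    by_contra hcpos
    push_neg at hcpos
    have h0 := hfS (0, u / c) (by rw [hSmem]; simp; positivity)
    rw [hdec, map_zero, zero_add, div_mul_cancel₀ _ (ne_of_gt hcpos)] at h0
    exact lt_irrefl _ h0
  have hfXle : ∀ y : X, fX y ≤ p y * (-c) + u := by
    intro y
    nlinarith [hbase y]
  have hkey : ∀ y : X, fX y ≤ p y * (-c) := by
    intro y
    refine le_of_forall_pos_le_add ?_
    intro ε hε
    obtain ⟨k, hk⟩ := exists_nat_gt (u / ε)
    have hkpos : (0:ℝ) < k := lt_trans (div_pos hu0 hε) hk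
    have h1 := hfXle ((k:ℝ) • y)
    rw [map_smul, smul_eq_mul, map_smul_eq_mul, Real.norm_eq_abs, abs_of_nonneg hkpos.le] at h1
    have h2 : fX y ≤ p y * (-c) + u / k := by
      have := mul_le_mul_of_nonneg_left h1 (le_of_lt (inv_pos.2 hkpos))
      rw [mul_add] at this
      rw [div_eq_inv_mul]
      calc fX y = (k:ℝ)⁻¹ * ((k:ℝ) * fX y) := by
            rw [← mul_assoc, inv_mul_cancel₀ (ne_of_gt hkpos), one_mul]
        _ ≤ (k:ℝ)⁻¹ * ((k:ℝ) * (p y * (-c))) + (k:ℝ)⁻¹ * u := by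
            rw [← mul_assoc ((k:ℝ)) (p y) (-c)]; exact this
        _ = p y * (-c) + (k:ℝ)⁻¹ * u := by
            rw [← mul_assoc, inv_mul_cancel₀ (ne_of_gt hkpos), one_mul]
    have h3 : u / k ≤ ε := by
      rw [div_le_iff₀ hkpos]
      rw [div_lt_iff₀ hε] at hk
      linarith [mul_comm ε (k:ℝ)]
    linarith
  have hcne : c < 0 := by
    rcases lt_or_eq_of_le hcle with h | h
    · exact h
    · exfalso
      have h1 := hkey x₀
      have h2 := hfx
      rw [hdec] at h2
      rw [h] at h1
      simp at h1
      rw [h, mul_zero, add_zero] at h2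
      linarith
  have hnc : (0:ℝ) < -c := by linarith
  refine ⟨(-c)⁻¹ • fX, ?_, ?_⟩
  · intro x
    have hle : ∀ y : X, ((-c)⁻¹ • fX) y ≤ p y := by
      intro y
      rw [ContinuousLinearMap.smul_apply, smul_eq_mul]
      have := mul_le_mul_of_nonneg_left (hkey y) (le_of_lt (inv_pos.2 hnc))
      calc (-c)⁻¹ * fX y ≤ (-c)⁻¹ * (p y * (-c)) := this
        _ = p y := by
            rw [mul_comm (p y) (-c), ← mul_assoc, inv_mul_cancel₀ (ne_of_gt hnc), one_mul]
    rw [abs_le]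
    constructor
    · have := hle (-x)
      rw [map_neg] at this
      simp only [map_neg_eq_map] at this
      linarith
    · exact hle x
  · rw [ContinuousLinearMap.smul_apply, smul_eq_mul]
    have h2 := hfx
    rw [hdec] at h2
    have h3 : fX x₀ > u + r * (-c) := by linarith
    have h4 : (-c)⁻¹ * fX x₀ > (-c)⁻¹ * (u + r * (-c)) :=
      mul_lt_mul_of_pos_left h3 (inv_pos.2 hnc)
    have h5 : (-c)⁻¹ * (u + r * (-c)) = (-c)⁻¹ * u + r := by
      rw [mul_add, mul_comm r (-c), ← mul_assoc, inv_mul_cancel₀ (ne_of_gt hnc), one_mul]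
    have h6 : 0 < (-c)⁻¹ * u := mul_pos (inv_pos.2 hnc) hu0
    linarith

/-- Mackey-type boundedness: a continuous seminorm is bounded on weakly compact sets. -/
lemma aux_mackey [LocallyConvexSpace ℝ X] (q : Seminorm ℝ X) (hq : Continuous ⇑q)
    {C : Set (WeakSpace ℝ X)} (hC : IsCompact C) :
    ∃ M : ℝ, ∀ x ∈ C, q x ≤ M := by
  classical
  rcases C.eq_empty_or_nonempty with hCe | hCne
  · exact ⟨0, by simp [hCe]⟩
  haveI : Nonempty C := hCne.to_subtype
  set B : Set (X → ℝ) := {g | (∀ a b, g (a + b) = g a + g b) ∧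
      (∀ (c : ℝ) (a : X), g (c • a) = c * g a) ∧ ∀ a, |g a| ≤ q a} with hB
  have h0B : (fun _ : X => (0:ℝ)) ∈ B := by
    refine ⟨by simp, by simp, fun a => by simpa using apply_nonneg q a⟩
  have hBclosed : IsClosed B := by
    have e1 : B = (⋂ (a : X), ⋂ (b : X), {g : X → ℝ | g (a + b) = g a + g b}) ∩
        ((⋂ (c : ℝ), ⋂ (a : X), {g : X → ℝ | g (c • a) = c * g a}) ∩
         (⋂ (a : X), {g : X → ℝ | |g a| ≤ q a})) := by
      ext g; simp only [hB, mem_setOf_eq, mem_inter_iff, mem_iInter]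
    rw [e1]
    refine IsClosed.inter ?_ (IsClosed.inter ?_ ?_)
    · exact isClosed_iInter fun a => isClosed_iInter fun b =>
        isClosed_eq (continuous_apply (a + b)) ((continuous_apply a).add (continuous_apply b))
    · exact isClosed_iInter fun c => isClosed_iInter fun a =>
        isClosed_eq (continuous_apply (c • a)) (continuous_const.mul (continuous_apply a))
    · exact isClosed_iInter fun a =>
        isClosed_le (continuous_apply a).abs continuous_const
  have hBcompact : IsCompact B := by
    refine IsCompact.of_isClosed_subset (isCompact_univ_pi fun a : X => isCompact_Icc
      (a := -(q a)) (b := q a)) hBclosed ?_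
    intro g hg
    intro a _
    exact abs_le.1 (hg.2.2 a)
  haveI : CompactSpace B := isCompact_iff_compactSpace.1 hBcompact
  haveI : Nonempty B := ⟨⟨_, h0B⟩⟩
  haveI : BaireSpace B := inferInstance
  have hcont : ∀ g ∈ B, Continuous fun x : WeakSpace ℝ X => g x := by
    intro g hg
    have h1 : Continuous g := aux_cont_of_le q hq hg.1 hg.2.2
    have hlin : IsLinearMap ℝ g := ⟨hg.1, fun c a => by rw [hg.2.1 c a, smul_eq_mul]⟩
    let G : X →L[ℝ] ℝ := ⟨IsLinearMap.mk' g hlin, h1⟩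
    exact WeakBilin.eval_continuous ((topDualPairing ℝ X).flip) G
  have hbddC : ∀ g : B, BddAbove (range fun x : C => |g.1 x.1|) := by
    rintro ⟨g, hg⟩
    have h2 : ContinuousOn (fun x : WeakSpace ℝ X => |g x|) C :=
      ((hcont g hg).abs).continuousOn
    have := (hC.image_of_continuousOn h2).bddAbove
    rwa [Set.image_eq_range] at this
  set φ : B → ℝ := fun g => ⨆ x : C, |g.1 x.1| with hφ
  have hφle : ∀ (g : B) (x : C), |g.1 x.1| ≤ φ g := fun g x => le_ciSup (hbddC g) x
  have hφlsc : LowerSemicontinuous φ := by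
    refine lowerSemicontinuous_ciSup (f := fun (x : C) (g : B) => |g.1 x.1|) ?_ ?_
    · intro g; exact hbddC g
    · intro x
      exact (((continuous_apply (A := fun _ : X => ℝ) (x.1 : X)).comp continuous_subtype_val).abs).lowerSemicontinuous
  have hcover : (⋃ m : ℕ, {g : B | φ g ≤ (m:ℝ)}) = univ := by
    refine eq_univ_of_forall fun g => ?_
    obtain ⟨m, hm⟩ := exists_nat_ge (φ g)
    exact mem_iUnion.2 ⟨m, hm⟩
  have hclosed : ∀ m : ℕ, IsClosed {g : B | φ g ≤ (m:ℝ)} := by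
    intro m
    exact hφlsc.isClosed_preimage m
  obtain ⟨m₀, g₀, hg₀⟩ := nonempty_interior_of_iUnion_of_closed hclosed hcover
  have hg₀A : g₀ ∈ {g : B | φ g ≤ (m₀:ℝ)} := interior_subset hg₀
  rw [mem_setOf_eq] at hg₀A
  have hm₀0 : (0:ℝ) ≤ m₀ := by positivity
  have hmemcomb : ∀ (t : ℝ), 0 ≤ t → t ≤ 1 → ∀ g : B,
      (fun x : X => g₀.1 x + t * (g.1 x - g₀.1 x)) ∈ B := by
    intro t ht0 ht1 g
    have hg := g.2
    have hg0 := g₀.2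
    refine ⟨fun a b => by beta_reduce; rw [hg.1 a b, hg0.1 a b]; ring,
      fun c a => by beta_reduce; rw [hg.2.1 c a, hg0.2.1 c a]; ring, fun a => ?_⟩
    beta_reduce
    have h1 : g₀.1 a + t * (g.1 a - g₀.1 a) = (1 - t) * g₀.1 a + t * g.1 a := by ring
    rw [h1]
    calc |(1 - t) * g₀.1 a + t * g.1 a| ≤ |(1 - t) * g₀.1 a| + |t * g.1 a| := abs_add_le _ _
      _ = (1 - t) * |g₀.1 a| + t * |g.1 a| := by
          rw [abs_mul, abs_mul, abs_of_nonneg (by linarith), abs_of_nonneg ht0]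
      _ ≤ (1 - t) * q a + t * q a := by
          have h2 := hg0.2.2 a
          have h3 := hg.2.2 a
          have h4 : (0:ℝ) ≤ 1 - t := by linarith
          gcongr
      _ = q a := by ring
  set cmb : ℕ → B → B := fun m g =>
    ⟨fun x : X => g₀.1 x + (1/(m+1) : ℝ) * (g.1 x - g₀.1 x),
      hmemcomb _ (by positivity) (by
        rw [div_le_one (by positivity)]; push_cast; linarith) g⟩ with hcmb
  have hcmbcont : ∀ m, Continuous (cmb m) := by
    intro m
    refine Continuous.subtype_mk ?_ _
    refine continuous_pi fun x => ?_
    exact continuous_const.add (continuous_const.mul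
      (((continuous_apply x).comp continuous_subtype_val).sub continuous_const))
  have hcmbcover : (⋃ m : ℕ, (cmb m) ⁻¹' (interior {g : B | φ g ≤ (m₀:ℝ)})) = univ := by
    refine eq_univ_of_forall fun g => ?_
    have htend : Tendsto (fun m : ℕ => cmb m g) atTop (𝓝 g₀) := by
      rw [nhds_induced, tendsto_comap_iff]
      refine tendsto_pi_nhds.2 fun x => ?_
      have h1 : Tendsto (fun m : ℕ => (1/(m+1) : ℝ)) atTop (𝓝 0) := by
        exact tendsto_one_div_add_atTop_nhds_zero_nat
      have h6 : Tendsto (fun m : ℕ => g₀.1 x + (1/(m+1) : ℝ) * (g.1 x - g₀.1 x)) atTop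
          (𝓝 (g₀.1 x + 0 * (g.1 x - g₀.1 x))) :=
        tendsto_const_nhds.add (h1.mul tendsto_const_nhds)
      simpa [hcmb] using h6
    have := htend.eventually (isOpen_interior.mem_nhds hg₀)
    obtain ⟨m, hm⟩ := this.exists
    exact mem_iUnion.2 ⟨m, hm⟩
  obtain ⟨T, hT⟩ := isCompact_univ.elim_finite_subcover
    (fun m : ℕ => (cmb m) ⁻¹' (interior {g : B | φ g ≤ (m₀:ℝ)}))
    (fun m => isOpen_interior.preimage (hcmbcont m)) (by rw [hcmbcover])
  have hTne : T.Nonempty := by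
    by_contra hTe
    rw [Finset.not_nonempty_iff_eq_empty] at hTe
    have := hT (mem_univ g₀)
    simp [hTe] at this
  set Mn : ℕ := T.max' hTne with hMn
  set M₁ : ℝ := 2 * (Mn + 1) * m₀ with hM₁
  have hφbound : ∀ g : B, φ g ≤ M₁ := by
    intro g
    have := hT (mem_univ g)
    rw [mem_iUnion₂] at this
    obtain ⟨m, hmT, hmg⟩ := this
    have hc' : cmb m g ∈ {g : B | φ g ≤ (m₀:ℝ)} := interior_subset hmg
    have hc : φ (cmb m g) ≤ (m₀:ℝ) := hc'
    have hptw : ∀ x : C, |g.1 x.1| ≤ (m+1) * |(cmb m g).1 x.1| + m * |g₀.1 x.1| := by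
      intro x
      have hexp : g.1 x.1 = (m+1) * ((cmb m g).1 x.1) - m * (g₀.1 x.1) := by
        show g.1 x.1 = (m+1) * (g₀.1 x.1 + (1/(m+1) : ℝ) * (g.1 x.1 - g₀.1 x.1)) - m * g₀.1 x.1
        have hne : ((m:ℝ)+1) ≠ 0 := by positivity
        field_simp
        ring
      rw [hexp]
      calc |(m+1) * ((cmb m g).1 x.1) - m * (g₀.1 x.1)|
          ≤ |(m+1) * ((cmb m g).1 x.1)| + |m * (g₀.1 x.1)| := abs_sub _ _
        _ = (m+1) * |(cmb m g).1 x.1| + m * |g₀.1 x.1| := by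
            rw [abs_mul, abs_mul, abs_of_nonneg (by positivity : (0:ℝ) ≤ (m:ℝ)+1),
              abs_of_nonneg (by positivity : (0:ℝ) ≤ (m:ℝ))]
    refine ciSup_le fun x => ?_
    have h1 := hptw x
    have h2 : |(cmb m g).1 x.1| ≤ (m₀:ℝ) := le_trans (hφle (cmb m g) x) hc
    have h3 : |g₀.1 x.1| ≤ (m₀:ℝ) := le_trans (hφle g₀ x) hg₀A
    have hmM : (m:ℝ) ≤ Mn := by exact_mod_cast T.le_max' m hmT
    calc |g.1 x.1| ≤ (m+1) * |(cmb m g).1 x.1| + m * |g₀.1 x.1| := h1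
      _ ≤ (m+1) * m₀ + m * m₀ := by gcongr
      _ ≤ (Mn+1) * m₀ + (Mn+1) * m₀ := by gcongr <;> linarith
      _ = M₁ := by rw [hM₁]; ring
  refine ⟨M₁, fun x hx => ?_⟩
  by_contra hlt
  push_neg at hlt
  obtain ⟨g, hgle, hgx⟩ := aux_hb_s11 q hq.lowerSemicontinuous x M₁ hlt
  have hgB : ⇑g ∈ B := ⟨fun a b => map_add g a b,
    fun c a => by rw [map_smul, smul_eq_mul], hgle⟩
  have h7 := hφle ⟨⇑g, hgB⟩ ⟨x, hx⟩
  have h2 := hφbound ⟨⇑g, hgB⟩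
  have h3 : g x ≤ |g x| := le_abs_self _
  linarith

/-- If a continuous functional vanishes on the joint kernel of a finite family, it lies in
its span. -/
lemma aux_ker_span (I : Finset (X →L[ℝ] ℝ)) (f : X →L[ℝ] ℝ)
    (h : ∀ x : X, (∀ g ∈ I, g x = 0) → f x = 0) :
    f ∈ Submodule.span ℝ (I : Set (X →L[ℝ] ℝ)) := by
  classical
  set Ψ : X →ₗ[ℝ] (I → ℝ) :=
    LinearMap.pi (fun g : I => ((g : X →L[ℝ] ℝ) : X →ₗ[ℝ] ℝ)) with hΨ
  have hΨapp : ∀ (x : X) (g : I), Ψ x g = (g : X →L[ℝ] ℝ) x := fun x g => rfl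
  have hker : LinearMap.ker Ψ ≤ LinearMap.ker (f : X →ₗ[ℝ] ℝ) := by
    intro x hx
    rw [LinearMap.mem_ker] at hx ⊢
    refine h x fun g hg => ?_
    have := congrFun hx ⟨g, hg⟩
    exact this
  set fbar := (LinearMap.ker Ψ).liftQ (f : X →ₗ[ℝ] ℝ) hker with hfbar
  set e := Ψ.quotKerEquivRange with he
  set h₀ : LinearMap.range Ψ →ₗ[ℝ] ℝ := fbar.comp (e.symm : LinearMap.range Ψ →ₗ[ℝ] _) with hh₀
  obtain ⟨Q, hQ⟩ := Submodule.exists_isCompl (LinearMap.range Ψ)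
  set π := (LinearMap.range Ψ).linearProjOfIsCompl Q hQ with hπ
  set H : (I → ℝ) →ₗ[ℝ] ℝ := h₀.comp π with hH
  have hHΨ : ∀ x : X, H (Ψ x) = f x := by
    intro x
    have h1 : π (Ψ x) = ⟨Ψ x, LinearMap.mem_range_self Ψ x⟩ := by
      have := Submodule.linearProjOfIsCompl_apply_left hQ ⟨Ψ x, LinearMap.mem_range_self Ψ x⟩
      exact this
    have h2 : e ((LinearMap.ker Ψ).mkQ x) = ⟨Ψ x, LinearMap.mem_range_self Ψ x⟩ := by
      apply Subtype.ext
      simp [he, LinearMap.quotKerEquivRange, Submodule.mkQ_apply]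
    have h3 : e.symm ⟨Ψ x, LinearMap.mem_range_self Ψ x⟩ = (LinearMap.ker Ψ).mkQ x := by
      rw [← h2, LinearEquiv.symm_apply_apply]
    calc H (Ψ x) = h₀ (π (Ψ x)) := rfl
      _ = h₀ ⟨Ψ x, LinearMap.mem_range_self Ψ x⟩ := by rw [h1]
      _ = fbar (e.symm ⟨Ψ x, LinearMap.mem_range_self Ψ x⟩) := rfl
      _ = fbar ((LinearMap.ker Ψ).mkQ x) := by rw [h3]
      _ = f x := by rw [hfbar]; simp [Submodule.mkQ_apply]
  have hdecomp : f = ∑ g : I, (H (Pi.single g 1)) • (g : X →L[ℝ] ℝ) := by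
    ext x
    rw [ContinuousLinearMap.sum_apply]
    have h4 : Ψ x = ∑ g : I, Pi.single g (Ψ x g) := by
      rw [Finset.univ_sum_single]
    have h5 : H (Ψ x) = ∑ g : I, (Ψ x g) * H (Pi.single g 1) := by
      conv_lhs => rw [h4]
      rw [map_sum]
      refine Finset.sum_congr rfl fun g _ => ?_
      have hsingle : Pi.single (M := fun _ : I => ℝ) g (Ψ x g) = (Ψ x g) • Pi.single g 1 := by
        rw [← Pi.single_smul, smul_eq_mul, mul_one]
      rw [hsingle, map_smul, smul_eq_mul]
    rw [← hHΨ x, h5]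
    congr 1
    ext g
    rw [ContinuousLinearMap.smul_apply, smul_eq_mul, hΨapp, mul_comm]
  rw [hdecomp]
  exact Submodule.sum_mem _ fun g _ =>
    Submodule.smul_mem _ _ (Submodule.subset_span g.2)

/-- Iterated choice of elements outside growing spans. -/
private noncomputable def auxFs {A : Type*} [DecidableEq A] (pick : Finset A → A) : ℕ → Finset A
  | 0 => ∅
  | n + 1 => insert (pick (auxFs pick n)) (auxFs pick n)

/-- Choice of a sequence escaping all finite-dimensional spans. -/
lemma aux_seq_escape {K : Set (X →L[ℝ] ℝ)}
    (h : ∀ F : Finset (X →L[ℝ] ℝ), ∃ f ∈ K, f ∉ Submodule.span ℝ (F : Set (X →L[ℝ] ℝ))) :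
    ∃ seq : ℕ → (X →L[ℝ] ℝ), (∀ n, seq n ∈ K) ∧
      ∀ I : Finset (X →L[ℝ] ℝ), ∃ n, seq n ∉ Submodule.span ℝ (I : Set (X →L[ℝ] ℝ)) := by
  classical
  choose pick hpickK hpickspan using h
  set Fs : ℕ → Finset (X →L[ℝ] ℝ) := auxFs pick with hFs
  set seqf : ℕ → (X →L[ℝ] ℝ) := fun n => pick (Fs n) with hseqf
  have hFs_zero : Fs 0 = ∅ := by rw [hFs]; rfl
  have hFs_succ : ∀ n, Fs (n + 1) = insert (seqf n) (Fs n) := by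
    intro n; rw [hFs, hseqf]; rfl
  refine ⟨seqf, fun n => hpickK _, ?_⟩
  intro I
  by_contra hall
  push_neg at hall
  set T := Submodule.span ℝ (I : Set (X →L[ℝ] ℝ)) with hT
  haveI : FiniteDimensional ℝ T := Module.Finite.span_of_finite ℝ I.finite_toSet
  have hFsT : ∀ n, (Fs n : Set (X →L[ℝ] ℝ)) ⊆ (T : Set (X →L[ℝ] ℝ)) := by
    intro n
    induction n with
    | zero => rw [hFs_zero]; simp
    | succ k ih =>
      rw [hFs_succ]
      intro f hf
      rcases Finset.mem_insert.1 hf with h | h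
      · rw [h]; exact hall k
      · exact ih h
  set S : ℕ → Submodule ℝ (X →L[ℝ] ℝ) :=
    fun n => Submodule.span ℝ (Fs n : Set (X →L[ℝ] ℝ)) with hSdef
  have hfin : ∀ n, FiniteDimensional ℝ (S n) :=
    fun n => Module.Finite.span_of_finite ℝ (Fs n).finite_toSet
  have hST : ∀ n, S n ≤ T := fun n => Submodule.span_le.2 (hFsT n)
  have hlt : ∀ n, S n < S (n + 1) := by
    intro n
    refine lt_of_le_of_ne
      (Submodule.span_mono (by rw [hFs_succ]; exact fun f hf => Finset.mem_insert_of_mem hf)) ?_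
    intro heq
    have h1 : seqf n ∈ S (n + 1) :=
      Submodule.subset_span (by rw [hFs_succ]; exact Finset.mem_insert_self _ _)
    rw [← heq] at h1
    exact hpickspan (Fs n) h1
  have hrank : ∀ n, n ≤ Module.finrank ℝ (S n) := by
    intro n
    induction n with
    | zero => exact Nat.zero_le _
    | succ k ih =>
      haveI := hfin (k + 1)
      have := Submodule.finrank_lt_finrank_of_lt (hlt k)
      omega
  have h2 := hrank (I.card + 1)
  have h3 : Module.finrank ℝ (S (I.card + 1)) ≤ Module.finrank ℝ T :=
    Submodule.finrank_mono (hST _)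
  have h4 : Module.finrank ℝ T ≤ I.card := by
    exact finrank_span_finset_le_card I
  omega

end AuxLemmas

set_option maxHeartbeats 1600000

/-- A weakly Ascoli Hausdorff real locally convex space `X` is `c₀`-barrelled if and only if
it is barrelled. -/
theorem statement11 {X : Type*} [AddCommGroup X] [Module ℝ X] [TopologicalSpace X]
    [IsTopologicalAddGroup X] [ContinuousSMul ℝ X] [LocallyConvexSpace ℝ X] [T2Space X]
    (hAsc : IsAscoli (WeakSpace ℝ X)) :
    C0Barrelled X ↔ BarrelledSpace ℝ X := by
  constructor
  · -- c₀-barrelled implies barrelled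
    intro hc0
    refine ⟨fun p hp => ?_⟩
    classical
    -- Main claim: the set of functionals dominated by `p` spans a finite-dimensional space.
    have claimA : ∃ F : Finset (X →L[ℝ] ℝ), ∀ f : X →L[ℝ] ℝ, (∀ x, |f x| ≤ p x) →
        f ∈ Submodule.span ℝ (F : Set (X →L[ℝ] ℝ)) := by
      by_contra hnot
      push_neg at hnot
      have hnot' : ∀ F : Finset (X →L[ℝ] ℝ), ∃ f ∈ {f : X →L[ℝ] ℝ | ∀ x, |f x| ≤ p x},
          f ∉ Submodule.span ℝ (F : Set (X →L[ℝ] ℝ)) := by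
        intro F
        obtain ⟨f, h1, h2⟩ := hnot F
        exact ⟨f, h1, h2⟩
      obtain ⟨seq, hseqK, hseq⟩ := aux_seq_escape hnot'
      have hseqb : ∀ n x, |seq n x| ≤ p x := fun n x => hseqK n x
      set v : ℕ → X →L[ℝ] ℝ := fun n => (Real.sqrt ((n:ℝ)+1))⁻¹ • seq n with hv
      have hsq : ∀ n : ℕ, 0 < Real.sqrt ((n:ℝ)+1) :=
        fun n => Real.sqrt_pos.2 (by positivity)
      have hvapp : ∀ n x, v n x = (Real.sqrt ((n:ℝ)+1))⁻¹ * seq n x :=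
        fun n x => rfl
      have hvb : ∀ n x, |v n x| ≤ (Real.sqrt ((n:ℝ)+1))⁻¹ * p x := by
        intro n x
        rw [hvapp, abs_mul, abs_of_nonneg (inv_nonneg.2 (Real.sqrt_nonneg _))]
        exact mul_le_mul_of_nonneg_left (hseqb n x) (inv_nonneg.2 (Real.sqrt_nonneg _))
      have hsq1 : ∀ n : ℕ, (1:ℝ) ≤ Real.sqrt ((n:ℝ)+1) := by
        intro n
        rw [Real.one_le_sqrt]
        push_cast
        linarith
      have hsqinv1 : ∀ n : ℕ, (Real.sqrt ((n:ℝ)+1))⁻¹ ≤ 1 := by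
        intro n
        have h1 := inv_mul_cancel₀ (ne_of_gt (hsq n))
        nlinarith [hsq1 n, inv_nonneg.2 (Real.sqrt_nonneg ((n:ℝ)+1))]
      have hvb' : ∀ n x, |v n x| ≤ p x := by
        intro n x
        refine le_trans (hvb n x) ?_
        calc (Real.sqrt ((n:ℝ)+1))⁻¹ * p x ≤ 1 * p x :=
              mul_le_mul_of_nonneg_right (hsqinv1 n) (apply_nonneg p x)
          _ = p x := one_mul _
      have hsqtop : Tendsto (fun n : ℕ => Real.sqrt ((n:ℝ)+1)) atTop atTop := by
        rw [tendsto_atTop_atTop]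
        intro bb
        refine ⟨Nat.ceil (bb^2), fun n hn => ?_⟩
        have h1 : bb^2 ≤ (n:ℝ) := le_trans (Nat.le_ceil _) (by exact_mod_cast hn)
        calc bb ≤ |bb| := le_abs_self _
          _ = Real.sqrt (bb^2) := (Real.sqrt_sq_eq_abs bb).symm
          _ ≤ Real.sqrt ((n:ℝ)+1) := Real.sqrt_le_sqrt (by linarith)
      have hvnull : ∀ x : X, Tendsto (fun n => v n x) atTop (𝓝 0) := by
        intro x
        have hbnd : ∀ n : ℕ, ‖v n x‖ ≤ (Real.sqrt ((n:ℝ)+1))⁻¹ * p x := by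
          intro n
          rw [Real.norm_eq_abs]
          exact hvb n x
        have h2 : Tendsto (fun n : ℕ => (Real.sqrt ((n:ℝ)+1))⁻¹ * p x) atTop (𝓝 0) := by
          have h3 : Tendsto (fun n : ℕ => (Real.sqrt ((n:ℝ)+1))⁻¹) atTop (𝓝 0) :=
            hsqtop.inv_tendsto_atTop
          simpa using h3.mul_const (p x)
        exact squeeze_zero_norm hbnd h2
      have hequi := hc0 v hvnull
      obtain ⟨U, hU, hUb⟩ : ∃ U ∈ 𝓝 (0:X), ∀ n, ∀ x ∈ U, |v n x| < 1 := by
        have h2 := hequi 0 _ (Metric.dist_mem_uniformity one_pos)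
        rw [eventually_iff_exists_mem] at h2
        obtain ⟨U, hU, hU2⟩ := h2
        refine ⟨U, hU, fun n x hx => ?_⟩
        have h3 : dist (v n 0) (v n x) < 1 := hU2 x hx n
        rwa [map_zero, dist_zero_left, Real.norm_eq_abs] at h3
      -- the continuous seminorm `q = sup_n |v n ·|`
      set qfam : ℕ → Seminorm ℝ X :=
        fun n => (normSeminorm ℝ ℝ).comp (v n).toLinearMap with hqfam
      have hqfamapp : ∀ n x, qfam n x = |v n x| := fun n x => rfl
      have hbddq : ∀ x : X, BddAbove (range fun n => qfam n x) := by
        intro x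
        refine ⟨p x, ?_⟩
        rintro y ⟨n, rfl⟩
        exact hvb' n x
      have hbddq' : BddAbove (range qfam) := Seminorm.bddAbove_range_iff.mpr hbddq
      set q : Seminorm ℝ X := ⨆ n, qfam n with hq
      have hqapp : ∀ x, q x = ⨆ n, qfam n x := by
        intro x
        rw [hq, Seminorm.coe_iSup_eq hbddq', iSup_apply]
      have hqx : ∀ x, ∀ n, |v n x| ≤ q x := by
        intro x n
        rw [hqapp]
        exact le_ciSup (hbddq x) n
      have hq1 : ∀ x ∈ U, q x ≤ 1 := by
        intro x hx
        rw [hqapp]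
        exact ciSup_le fun n => (hUb n x hx).le
      have hqcont : Continuous ⇑q := by
        refine Seminorm.continuous' (r := 1) ?_
        refine mem_of_superset hU ?_
        intro x hx
        rw [Seminorm.mem_closedBall_zero]
        exact hq1 x hx
      -- the compact set in `C(X_w, ℝ)`
      set useq : ℕ → C(WeakSpace ℝ X, ℝ) := fun n =>
        ⟨fun x => ((n:ℝ)+1)⁻¹ * seq n x,
          continuous_const.mul (WeakBilin.eval_continuous ((topDualPairing ℝ X).flip) (seq n))⟩
        with husq
      have husqapp : ∀ n (x : WeakSpace ℝ X), useq n x = ((n:ℝ)+1)⁻¹ * seq n x :=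
        fun n x => rfl
      have htend : Tendsto useq atTop (𝓝 (0 : C(WeakSpace ℝ X, ℝ))) := by
        rw [ContinuousMap.tendsto_iff_forall_isCompact_tendstoUniformlyOn]
        intro C hCc
        obtain ⟨M, hM⟩ := aux_mackey q hqcont hCc
        have hM0 : (0:ℝ) ≤ max M 0 := le_max_right _ _
        have hMle : ∀ x ∈ C, q x ≤ max M 0 := fun x hx => le_trans (hM x hx) (le_max_left _ _)
        rw [Metric.tendstoUniformlyOn_iff]
        intro ε hε
        have hev := hsqtop.eventually_gt_atTop ((max M 0) / ε)
        filter_upwards [hev] with n hn x hx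
        have hb : |useq n x| ≤ (Real.sqrt ((n:ℝ)+1))⁻¹ * q x := by
          rw [husqapp, abs_mul, abs_of_nonneg (by positivity : (0:ℝ) ≤ ((n:ℝ)+1)⁻¹)]
          have h1 : ((n:ℝ)+1)⁻¹ = (Real.sqrt ((n:ℝ)+1))⁻¹ * (Real.sqrt ((n:ℝ)+1))⁻¹ := by
            rw [← mul_inv, Real.mul_self_sqrt (by positivity)]
          rw [h1, mul_assoc]
          refine mul_le_mul_of_nonneg_left ?_ (inv_nonneg.2 (Real.sqrt_nonneg _))
          have h2 : (Real.sqrt ((n:ℝ)+1))⁻¹ * |seq n x| = |v n x| := by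
            rw [hvapp n x, abs_mul, abs_of_nonneg (inv_nonneg.2 (Real.sqrt_nonneg _))]
          rw [h2]
          exact hqx x n
        have h3 : (Real.sqrt ((n:ℝ)+1))⁻¹ * q x < ε := by
          have h4 : q x ≤ max M 0 := hMle x hx
          have h5 : (Real.sqrt ((n:ℝ)+1))⁻¹ * q x ≤ (Real.sqrt ((n:ℝ)+1))⁻¹ * max M 0 :=
            mul_le_mul_of_nonneg_left h4 (inv_nonneg.2 (Real.sqrt_nonneg _))
          have h6 : (Real.sqrt ((n:ℝ)+1))⁻¹ * max M 0 < ε := by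
            rw [inv_mul_lt_iff₀ (hsq n)]
            rw [div_lt_iff₀ hε] at hn
            linarith
          linarith
        have h6 : dist ((0 : C(WeakSpace ℝ X, ℝ)) x) (useq n x) = |useq n x| := by
          rw [ContinuousMap.zero_apply, dist_zero_left, Real.norm_eq_abs]
        rw [h6]
        exact lt_of_le_of_lt hb h3
      have hcpt : IsCompact (insert (0 : C(WeakSpace ℝ X, ℝ)) (Set.range useq)) :=
        htend.isCompact_insert_range
      have hequi2 := hAsc _ hcpt
      obtain ⟨V, hV, hVb⟩ : ∃ V ∈ 𝓝 (0 : WeakSpace ℝ X), ∀ n, ∀ x ∈ V, |useq n x| < 1 := by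
        have h2 := hequi2 (0 : WeakSpace ℝ X) _ (Metric.dist_mem_uniformity one_pos)
        rw [eventually_iff_exists_mem] at h2
        obtain ⟨V, hV, hV2⟩ := h2
        refine ⟨V, hV, fun n x hx => ?_⟩
        have h3 : dist ((useq n) (0 : WeakSpace ℝ X)) ((useq n) x) < 1 :=
          hV2 x hx ⟨useq n, mem_insert_of_mem _ (mem_range_self n)⟩
        have h4 : (useq n) (0 : WeakSpace ℝ X) = 0 := by
          rw [husqapp]
          show ((n:ℝ)+1)⁻¹ * seq n (0 : X) = 0
          rw [map_zero, mul_zero]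
        rwa [h4, dist_zero_left, Real.norm_eq_abs] at h3
      -- extract a basic weak neighborhood
      have hbasis := LinearMap.hasBasis_weakBilin ((topDualPairing ℝ X).flip)
      replace hV := hbasis.mem_iff.1 hV
      obtain ⟨s, hs, hsV⟩ := hV
      have hs' : s ∈ (((topDualPairing ℝ X).flip).toSeminormFamily).basisSets := hs
      rw [SeminormFamily.basisSets_iff] at hs'
      obtain ⟨I, r, hr, hsB⟩ := hs'
      obtain ⟨n, hn⟩ := hseq I
      have hwit : ∃ x : X, (∀ g ∈ I, g x = 0) ∧ seq n x ≠ 0 := by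
        by_contra hno
        push_neg at hno
        refine hn (aux_ker_span I (seq n) fun x hx => ?_)
        by_contra hne
        exact hne (hno x hx)
      obtain ⟨w, hwker, hwne⟩ := hwit
      set t : ℝ := 2 * ((n:ℝ)+1) / seq n w with ht
      have hsup0 : ((I.sup (((topDualPairing ℝ X).flip).toSeminormFamily)) w : ℝ) ≤ 0 := by
        refine Seminorm.finset_sup_apply_le le_rfl fun g hg => ?_
        show ‖(topDualPairing ℝ X).flip w g‖ ≤ 0
        have : (topDualPairing ℝ X).flip w g = g w := rfl
        rw [this, hwker g hg]
        simp
      rw [hsB] at hsV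
      have hmem : ((t • w : X) : WeakSpace ℝ X) ∈ V := by
        refine hsV ?_
        show (t • w : X) ∈ (I.sup (((topDualPairing ℝ X).flip).toSeminormFamily)).ball 0 r
        rw [Seminorm.mem_ball_zero, map_smul_eq_mul]
        have h7 : (0:ℝ) ≤ (I.sup (((topDualPairing ℝ X).flip).toSeminormFamily)) w :=
          apply_nonneg _ _
        have h8 : (I.sup (((topDualPairing ℝ X).flip).toSeminormFamily)) w = 0 :=
          le_antisymm hsup0 h7
        rw [h8, mul_zero]
        exact hr
      have hcontr := hVb n _ hmem
      rw [husqapp n ((t • w : X) : WeakSpace ℝ X)] at hcontr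
      have hval : seq n ((t • w : X) : WeakSpace ℝ X) = 2 * ((n:ℝ)+1) := by
        show seq n (t • w) = 2 * ((n:ℝ)+1)
        rw [map_smul, smul_eq_mul, ht, div_mul_cancel₀ _ hwne]
      rw [hval] at hcontr
      have hne1 : ((n:ℝ)+1) ≠ 0 := by positivity
      rw [show ((n:ℝ)+1)⁻¹ * (2 * ((n:ℝ)+1)) = 2 by field_simp] at hcontr
      norm_num at hcontr
    -- Step 4: conclude continuity of `p` from finite-dimensionality
    obtain ⟨F, hF⟩ := claimA
    have hker0 : ∀ x : X, (∀ g ∈ F, g x = 0) → p x = 0 := by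
      intro x hx
      refine le_antisymm ?_ (apply_nonneg p x)
      by_contra hpos
      push_neg at hpos
      obtain ⟨g, hgle, hgx⟩ := aux_hb_s11 p hp x 0 hpos
      have hspan := hF g hgle
      set ev : (X →L[ℝ] ℝ) →ₗ[ℝ] ℝ :=
        { toFun := fun f => f x, map_add' := fun f₁ f₂ => rfl,
          map_smul' := fun c f => rfl } with hev
      have hFker : (F : Set (X →L[ℝ] ℝ)) ⊆ (LinearMap.ker ev : Set (X →L[ℝ] ℝ)) := by
        intro f hf
        rw [SetLike.mem_coe, LinearMap.mem_ker]
        exact hx f hf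
      have hgker : g ∈ LinearMap.ker ev := (Submodule.span_le.2 hFker) hspan
      rw [LinearMap.mem_ker] at hgker
      have : g x = 0 := hgker
      linarith
    set Φ : X →ₗ[ℝ] (F → ℝ) :=
      LinearMap.pi (fun g : F => ((g : X →L[ℝ] ℝ) : X →ₗ[ℝ] ℝ)) with hΦ
    have hΦcont : Continuous ⇑Φ := continuous_pi (fun g : F => (g : X →L[ℝ] ℝ).continuous)
    have hzero : ∀ y : X, Φ y = 0 → p y = 0 := by
      intro y hy
      refine hker0 y fun g hg => ?_
      have := congrFun hy ⟨g, hg⟩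
      exact this
    set Vr := LinearMap.range Φ with hVr
    haveI : FiniteDimensional ℝ Vr := inferInstance
    set d := Module.finrank ℝ Vr with hd
    set b : Module.Basis (Fin d) ℝ Vr := Module.finBasis ℝ Vr with hb
    have hbmem : ∀ j, ∃ x : X, Φ x = (b j : F → ℝ) := by
      intro j
      exact (b j).2
    choose z hz using hbmem
    set σ : Vr →ₗ[ℝ] X := Module.Basis.constr b ℝ z with hσ
    have hΦσ : ∀ wv : Vr, Φ (σ wv) = (wv : F → ℝ) := by
      have hcomp : Φ.comp σ = Vr.subtype := by
        refine b.ext fun j => ?_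
        rw [LinearMap.comp_apply, hσ, Module.Basis.constr_basis, Submodule.subtype_apply]
        exact hz j
      intro wv
      have := LinearMap.congr_fun hcomp wv
      rwa [LinearMap.comp_apply, Submodule.subtype_apply] at this
    have hfac : ∀ x : X, p x ≤ p (σ ⟨Φ x, LinearMap.mem_range_self Φ x⟩) := by
      intro x
      have h2 : p (x - σ ⟨Φ x, LinearMap.mem_range_self Φ x⟩) = 0 := by
        refine hzero _ ?_
        rw [map_sub, hΦσ]
        simp
      calc p x = p (σ ⟨Φ x, LinearMap.mem_range_self Φ x⟩ +
            (x - σ ⟨Φ x, LinearMap.mem_range_self Φ x⟩)) := by rw [add_sub_cancel]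
        _ ≤ p (σ ⟨Φ x, LinearMap.mem_range_self Φ x⟩) +
            p (x - σ ⟨Φ x, LinearMap.mem_range_self Φ x⟩) := map_add_le_add p _ _
        _ = p (σ ⟨Φ x, LinearMap.mem_range_self Φ x⟩) := by rw [h2, add_zero]
    have hsum : ∀ (s : Finset (Fin d)) (f : Fin d → X),
        p (∑ j ∈ s, f j) ≤ ∑ j ∈ s, p (f j) := by
      intro s f
      induction s using Finset.induction_on with
      | empty => simp
      | insert _ _ hj ih =>
        rw [Finset.sum_insert hj, Finset.sum_insert hj]
        exact le_trans (map_add_le_add p _ _) (by linarith)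
    have hσb : ∀ wv : Vr, p (σ wv) ≤ ∑ j, |b.repr wv j| * p (z j) := by
      intro wv
      rw [hσ, Module.Basis.constr_apply_fintype]
      refine le_trans (hsum Finset.univ _) ?_
      refine Finset.sum_le_sum fun j _ => ?_
      rw [map_smul_eq_mul, Real.norm_eq_abs, Module.Basis.equivFun_apply]
    have hcoordcont : ∀ j, Continuous fun x : X =>
        b.repr ⟨Φ x, LinearMap.mem_range_self Φ x⟩ j := by
      intro j
      have hΦ'cont : Continuous fun x : X =>
          (⟨Φ x, LinearMap.mem_range_self Φ x⟩ : Vr) :=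
        hΦcont.subtype_mk _
      have hcj : Continuous fun wv : Vr => b.repr wv j := by
        have h1 := LinearMap.continuous_of_finiteDimensional (b.coord j)
        have h2 : ∀ wv : Vr, b.coord j wv = b.repr wv j := fun wv => rfl
        exact h1
      exact hcj.comp hΦ'cont
    set hbound : X → ℝ := fun x =>
      ∑ j, |b.repr ⟨Φ x, LinearMap.mem_range_self Φ x⟩ j| * p (z j) with hhb
    have hhcont : Continuous hbound := by
      refine continuous_finset_sum _ fun j _ => ?_
      exact ((hcoordcont j).abs).mul continuous_const
    have hph : ∀ x, p x ≤ hbound x := fun x => le_trans (hfac x) (hσb _)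
    have hh0 : hbound 0 = 0 := by
      have h1 : (⟨Φ 0, LinearMap.mem_range_self Φ 0⟩ : Vr) = 0 := by
        apply Subtype.ext
        simp
      show (∑ j, |b.repr ⟨Φ 0, LinearMap.mem_range_self Φ 0⟩ j| * p (z j)) = 0
      rw [h1]
      simp
    refine Seminorm.continuous' (r := 1) ?_
    have hopen : hbound ⁻¹' (Iio 1) ∈ 𝓝 (0 : X) := by
      refine hhcont.continuousAt.preimage_mem_nhds ?_
      rw [hh0]
      exact Iio_mem_nhds one_pos
    refine mem_of_superset hopen ?_
    intro x hx
    rw [Seminorm.mem_closedBall_zero]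
    exact le_trans (hph x) (le_of_lt hx)
  · -- barrelled implies c₀-barrelled
    intro hbar
    intro u hu
    haveI := hbar
    set qfam : ℕ → Seminorm ℝ X :=
      fun n => (normSeminorm ℝ ℝ).comp (u n).toLinearMap with hqfam
    have hqfamapp : ∀ n x, qfam n x = ‖u n x‖ := fun n x => rfl
    have hbdd : ∀ x : X, BddAbove (range fun n => qfam n x) := by
      intro x
      have h1 := ((hu x).norm).bddAbove_range
      exact h1
    have hbdd' : BddAbove (range qfam) := Seminorm.bddAbove_range_iff.mpr hbdd
    have hqcont : Continuous ⇑(⨆ n, qfam n) := by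
      rw [Seminorm.coe_iSup_eq hbdd']
      refine Seminorm.continuous_iSup qfam (fun n => ?_) hbdd'
      have h2 : ⇑(qfam n) = fun x => ‖u n x‖ := rfl
      rw [h2]
      exact (u n).continuous.norm
    set Q : Seminorm ℝ X := ⨆ n, qfam n with hQ
    have hQapp : ∀ y : X, ∀ n, ‖u n y‖ ≤ Q y := by
      intro y n
      have h1 : Q y = ⨆ n, qfam n y := by
        rw [hQ, Seminorm.coe_iSup_eq hbdd', iSup_apply]
      rw [h1]
      exact le_ciSup (hbdd y) n
    intro x₀ U hU
    obtain ⟨ε, hε, hsub⟩ := Metric.mem_uniformity_dist.1 hU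
    have hev : {x : X | Q (x₀ - x) < ε} ∈ 𝓝 x₀ := by
      have hc : Continuous fun x : X => Q (x₀ - x) :=
        hqcont.comp (continuous_const.sub continuous_id)
      have h3 : (fun x : X => Q (x₀ - x)) ⁻¹' (Iio ε) ∈ 𝓝 x₀ := by
        refine hc.continuousAt.preimage_mem_nhds ?_
        have h4 : Q (x₀ - x₀) = 0 := by
          rw [sub_self]
          exact map_zero Q
        rw [h4]
        exact Iio_mem_nhds hε
      exact h3
    filter_upwards [hev] with x hx n
    refine hsub ?_
    have h5 : u n x₀ - u n x = u n (x₀ - x) := (map_sub (u n) x₀ x).symm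
    calc dist (u n x₀) (u n x) = |u n x₀ - u n x| := Real.dist_eq _ _
      _ = ‖u n (x₀ - x)‖ := by rw [h5, Real.norm_eq_abs]
      _ ≤ Q (x₀ - x) := hQapp _ n
      _ < ε := hx
end

section
/- Let X be a completely regular Hausdorff space. Denote by C_k(X) the space C(X,ℝ) of continuous real-valued functions with the compact-open topology, and by C_p(X) the same space with the topology of pointwise convergence. Then the following are equivalent: (i) C_k(X) is a barrelled locally convex space and is weakly Ascoli; (ii) C_p(X) is a barrelled locally convex space and is an Ascoli space. -/
open Set Topology

/-- `C_p(X)`: the space `C(X,ℝ)` equipped with the topology of pointwise convergence. -/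
def Cp (X : Type*) [TopologicalSpace X] : Type _ := C(X, ℝ)

/-- The underlying continuous map of an element of `Cp X`. -/
def Cp.toCM {X : Type*} [TopologicalSpace X] (f : Cp X) : C(X, ℝ) := f

instance (X : Type*) [TopologicalSpace X] : TopologicalSpace (Cp X) :=
  TopologicalSpace.induced (fun f : Cp X => (f.toCM : X → ℝ)) Pi.topologicalSpace

instance (X : Type*) [TopologicalSpace X] : AddCommGroup (Cp X) :=
  inferInstanceAs (AddCommGroup C(X, ℝ))

noncomputable instance (X : Type*) [TopologicalSpace X] : Module ℝ (Cp X) :=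
  inferInstanceAs (Module ℝ C(X, ℝ))

section Aux

variable {X : Type*} [TopologicalSpace X]

/-- evaluation at a point as a continuous linear functional on `C_k(X)` -/
noncomputable def evalCLM (x : X) : C(X, ℝ) →L[ℝ] ℝ where
  toFun f := f x
  map_add' _ _ := rfl
  map_smul' _ _ := rfl
  cont := continuous_eval_const x

@[simp] lemma evalCLM_apply (x : X) (f : C(X, ℝ)) : evalCLM x f = f x := rfl

/-- Identity from the weak space to `C(X,ℝ)` (definitionally equal types). -/
def W2C {X : Type*} [TopologicalSpace X] : WeakSpace ℝ C(X, ℝ) → C(X, ℝ) := fun f => f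

/-- generic extraction of basic neighborhoods in an `induced` pi-topology -/
lemma mem_induced_pi_nhds {E ι : Type*} {φ : E → ι → ℝ} {x₀ : E} {U : Set E}
    (hU : U ∈ @nhds E (TopologicalSpace.induced φ Pi.topologicalSpace) x₀) :
    ∃ (s : Finset ι) (ε : ℝ), 0 < ε ∧
      {f : E | ∀ i ∈ s, |φ f i - φ x₀ i| < ε} ⊆ U := by
  rw [nhds_induced, Filter.mem_comap] at hU
  obtain ⟨t, ht, htU⟩ := hU
  rw [nhds_pi, Filter.mem_pi] at ht
  obtain ⟨I, hIfin, V, hV, hIV⟩ := ht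
  rcases I.eq_empty_or_nonempty with rfl | hne
  · refine ⟨∅, 1, one_pos, fun f _ => htU ?_⟩
    apply hIV
    intro i hi
    exact absurd hi (notMem_empty i)
  · choose e he0 heV using fun i => Metric.mem_nhds_iff.mp (hV i)
    have hIne : hIfin.toFinset.Nonempty := by
      simpa [Set.Finite.toFinset_nonempty] using hne
    refine ⟨hIfin.toFinset, hIfin.toFinset.inf' hIne e, ?_, ?_⟩
    · rw [Finset.lt_inf'_iff]
      exact fun i _ => he0 i
    · intro f hf
      apply htU
      apply hIV
      intro i hi
      have hi' : i ∈ hIfin.toFinset := hIfin.mem_toFinset.mpr hi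
      have := hf i hi'
      apply heV i
      rw [Metric.mem_ball, Real.dist_eq]
      exact lt_of_lt_of_le this (Finset.inf'_le e hi')

/-- basic neighborhoods of `0` in a weak space -/
lemma weak_nhds_zero {E : Type*} [AddCommGroup E] [Module ℝ E] [TopologicalSpace E]
    {U : Set (WeakSpace ℝ E)} (hU : U ∈ 𝓝 (0 : WeakSpace ℝ E)) :
    ∃ (s : Finset (E →L[ℝ] ℝ)) (ε : ℝ), 0 < ε ∧
      {f : WeakSpace ℝ E | ∀ μ ∈ s, |(topDualPairing ℝ E).flip f μ| < ε} ⊆ U := by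
  obtain ⟨s, ε, hε, hsub⟩ := mem_induced_pi_nhds
    (φ := fun (f : WeakSpace ℝ E) (μ : E →L[ℝ] ℝ) => (topDualPairing ℝ E).flip f μ) hU
  refine ⟨s, ε, hε, fun f hf => hsub ?_⟩
  intro μ hμ
  have h0 : (topDualPairing ℝ E).flip (0 : WeakSpace ℝ E) μ = 0 := by
    show μ (0 : E) = 0; exact map_zero μ
  simpa [h0] using hf μ hμ

/-- restriction to a compact set as a continuous linear map into `C(K,ℝ)` -/
noncomputable def restrCLM (K : Set X) : C(X, ℝ) →L[ℝ] C(K, ℝ) where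
  toFun f := f.restrict K
  map_add' _ _ := rfl
  map_smul' _ _ := rfl
  cont := ContinuousMap.continuous_restrict K

/-- A weakly compact subset of `C_k(X)` is uniformly bounded on every compact `K ⊆ X`. -/
lemma weak_compact_bounded_s12 {A : Set (WeakSpace ℝ C(X, ℝ))} (hA : IsCompact A)
    {K : Set X} (hK : IsCompact K) :
    ∃ M : ℝ, ∀ f ∈ A, ∀ x ∈ K, |(W2C f) x| ≤ M := by
  haveI : CompactSpace K := isCompact_iff_compactSpace.mp hK
  set g : A → (StrongDual ℝ C(K, ℝ)) →L[ℝ] ℝ :=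
    fun f => NormedSpace.inclusionInDoubleDual ℝ C(K, ℝ)
      (restrCLM K (W2C (f : WeakSpace ℝ C(X, ℝ)))) with hg
  have hbound : ∀ ν : StrongDual ℝ C(K, ℝ), ∃ C, ∀ f : A, ‖g f ν‖ ≤ C := by
    intro ν
    have hcont : Continuous fun f : WeakSpace ℝ C(X, ℝ) => (ν.comp (restrCLM K)) (W2C f) :=
      WeakBilin.eval_continuous _ (ν.comp (restrCLM K))
    have himg : IsCompact ((fun f : WeakSpace ℝ C(X, ℝ) => (ν.comp (restrCLM K)) (W2C f)) '' A) :=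
      hA.image hcont
    obtain ⟨C, hC⟩ := himg.isBounded.subset_closedBall 0
    refine ⟨C, fun f => ?_⟩
    have := hC (mem_image_of_mem _ f.2)
    simpa [hg, Real.dist_eq, NormedSpace.dual_def] using this
  obtain ⟨C', hC'⟩ := banach_steinhaus hbound
  refine ⟨C', fun f hf x hx => ?_⟩
  have h1 : ‖restrCLM K (W2C f)‖ ≤ C' := by
    have h2 := hC' ⟨f, hf⟩
    have h3 : ‖NormedSpace.inclusionInDoubleDual ℝ C(K, ℝ) (restrCLM K (W2C f))‖
        = ‖restrCLM K (W2C f)‖ :=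
      (NormedSpace.inclusionInDoubleDualLi ℝ (E := C(K, ℝ))).norm_map _
    replace h2 : ‖NormedSpace.inclusionInDoubleDual ℝ C(K, ℝ) (restrCLM K (W2C f))‖ ≤ C' := h2
    simpa [h3] using h2
  calc |(W2C f) x| = ‖(restrCLM K (W2C f)) ⟨x, hx⟩‖ := rfl
    _ ≤ ‖restrCLM K (W2C f)‖ := ContinuousMap.norm_coe_le_norm _ _
    _ ≤ C' := h1

end Aux

section Tychonoff

variable {X : Type*} [TopologicalSpace X] [CompletelyRegularSpace X] [T2Space X]

lemma exists_one_zero {F : Set X} (hF : F.Finite) {y : X} (hy : y ∉ F) :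
    ∃ f : C(X, ℝ), f y = 1 ∧ ∀ x ∈ F, f x = 0 := by
  obtain ⟨g, hg, hgy, hgF⟩ :=
    CompletelyRegularSpace.completely_regular y F hF.isClosed hy
  refine ⟨⟨fun x => 1 - (g x : ℝ), by fun_prop⟩, ?_, ?_⟩
  · simp [hgy]
  · intro x hx
    simp [hgF hx]

lemma linearIndependent_evalLM {m : ℕ} {x : Fin m → X} (hx : Function.Injective x) :
    LinearIndependent ℝ fun i => ((evalCLM (x i) : C(X, ℝ) →L[ℝ] ℝ) : C(X, ℝ) →ₗ[ℝ] ℝ) := by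
  rw [Fintype.linearIndependent_iff]
  intro c hc j
  obtain ⟨f, hfy, hfF⟩ := exists_one_zero ((Set.finite_range x).subset
      (Set.image_subset_range x _) : (x '' {i | i ≠ j}).Finite)
    (by
      intro h
      obtain ⟨i, hi, hij⟩ := h
      exact hi (hx hij))
  have := congrArg (fun μ : C(X, ℝ) →ₗ[ℝ] ℝ => μ f) hc
  simp only [LinearMap.coe_sum, Finset.sum_apply, LinearMap.smul_apply,
    ContinuousLinearMap.coe_coe, evalCLM_apply, LinearMap.zero_apply, smul_eq_mul] at this
  rw [Finset.sum_eq_single j] at this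
  · simpa [hfy] using this
  · intro i _ hij
    rw [hfF (x i) ⟨i, hij, rfl⟩, mul_zero]
  · intro h; exact absurd (Finset.mem_univ j) h

lemma exists_eval_not_mem_span (x : ℕ → X) (hx : Function.Injective x)
    (s : Finset (C(X, ℝ) →L[ℝ] ℝ)) :
    ∃ n, ((evalCLM (x n) : C(X, ℝ) →L[ℝ] ℝ) : C(X, ℝ) →ₗ[ℝ] ℝ) ∉
      Submodule.span ℝ ((fun μ : C(X, ℝ) →L[ℝ] ℝ => (μ : C(X, ℝ) →ₗ[ℝ] ℝ)) '' s) := by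
  by_contra h
  push_neg at h
  set T : Set (C(X, ℝ) →ₗ[ℝ] ℝ) := (fun μ : C(X, ℝ) →L[ℝ] ℝ => (μ : C(X, ℝ) →ₗ[ℝ] ℝ)) '' s
    with hT
  have hTfin : T.Finite := (s.finite_toSet).image _
  set W := Submodule.span ℝ T with hW
  haveI : FiniteDimensional ℝ W := FiniteDimensional.span_of_finite ℝ hTfin
  set m := hTfin.toFinset.card with hm
  have hinj : Function.Injective fun i : Fin (m + 1) => x i := by
    intro a b hab
    exact Fin.val_injective (by exact_mod_cast hx hab)
  have hli : LinearIndependent ℝ fun i : Fin (m + 1) =>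
      ((evalCLM (x i) : C(X, ℝ) →L[ℝ] ℝ) : C(X, ℝ) →ₗ[ℝ] ℝ) :=
    linearIndependent_evalLM hinj
  have hli' : LinearIndependent ℝ fun i : Fin (m + 1) =>
      (⟨_, h i⟩ : W) := hli.of_comp W.subtype
  have hcard := hli'.fintype_card_le_finrank
  have hle : Module.finrank ℝ W ≤ m := by
    haveI := hTfin.fintype
    have := finrank_span_le_card (R := ℝ) T
    simpa [hm, hW, Set.Finite.card_toFinset, ← Set.toFinset_card] using this
  simp [Fintype.card_fin] at hcard
  omega

lemma exists_mem_ker_ne_zero {E : Type*} [AddCommGroup E] [Module ℝ E]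
    [TopologicalSpace E]
    (s : Finset (E →L[ℝ] ℝ)) (δ : E →ₗ[ℝ] ℝ)
    (hδ : δ ∉ Submodule.span ℝ ((fun μ : E →L[ℝ] ℝ => (μ : E →ₗ[ℝ] ℝ)) '' s)) :
    ∃ f : E, (∀ μ ∈ s, μ f = 0) ∧ δ f ≠ 0 := by
  by_contra h
  push_neg at h
  have hker : (⨅ μ : ↥s, LinearMap.ker ((μ : E →L[ℝ] ℝ) : E →ₗ[ℝ] ℝ)) ≤
      LinearMap.ker δ := by
    intro f hf
    simp only [Submodule.mem_iInf, LinearMap.mem_ker] at hf ⊢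
    exact h f (fun μ hμ => hf ⟨μ, hμ⟩)
  have hmem := mem_span_of_iInf_ker_le_ker hker
  have hr : Set.range (fun μ : ↥s => ((μ : E →L[ℝ] ℝ) : E →ₗ[ℝ] ℝ)) =
      (fun μ : E →L[ℝ] ℝ => (μ : E →ₗ[ℝ] ℝ)) '' s := by
    ext g
    constructor
    · rintro ⟨μ, rfl⟩; exact ⟨μ, μ.2, rfl⟩
    · rintro ⟨μ, hμ, rfl⟩; exact ⟨⟨μ, hμ⟩, rfl⟩
  rw [hr] at hmem
  exact hδ hmem

/-- The key hard step: if `C_k(X)` is weakly Ascoli, all compact subsets of `X` are finite. -/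
lemma compact_finite_of_weakAscoli (h : IsAscoli (WeakSpace ℝ C(X, ℝ)))
    {K : Set X} (hK : IsCompact K) : K.Finite := by
  by_contra hinf
  have hKinf : K.Infinite := hinf
  set x : ℕ → X := fun n => ((Set.Infinite.natEmbedding K hKinf) n : X) with hxdef
  have hx : Function.Injective x := fun a b hab =>
    (Set.Infinite.natEmbedding K hKinf).injective (Subtype.ext hab)
  have hxK : ∀ n, x n ∈ K := fun n => ((Set.Infinite.natEmbedding K hKinf) n).2
  -- the test functions
  have gcont : ∀ n : ℕ, Continuous fun f : WeakSpace ℝ C(X, ℝ) =>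
      max 0 (min 1 (|evalCLM (x n) (W2C f)| - (n : ℝ))) := by
    intro n
    have h1 : Continuous fun f : WeakSpace ℝ C(X, ℝ) => evalCLM (x n) (W2C f) :=
      WeakBilin.eval_continuous _ (evalCLM (x n))
    exact continuous_const.max (continuous_const.min ((h1.abs).sub continuous_const))
  set g : ℕ → C(WeakSpace ℝ C(X, ℝ), ℝ) :=
    fun n => ⟨fun f => max 0 (min 1 (|evalCLM (x n) (W2C f)| - (n : ℝ))), gcont n⟩ with hgdef
  -- g tends to 0 in the compact-open topology
  have hg0 : Filter.Tendsto g Filter.atTop (𝓝 (0 : C(WeakSpace ℝ C(X, ℝ), ℝ))) := by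
    rw [ContinuousMap.tendsto_iff_forall_isCompact_tendstoUniformlyOn]
    intro A hA
    obtain ⟨M, hM⟩ := weak_compact_bounded_s12 hA hK
    rw [Metric.tendstoUniformlyOn_iff]
    intro ε hε
    filter_upwards [Filter.eventually_ge_atTop ⌈M⌉₊] with n hn f hf
    have hfM : |evalCLM (x n) (W2C f)| ≤ M := hM f hf (x n) (hxK n)
    have hMn : M ≤ (n : ℝ) := le_trans (Nat.le_ceil M) (by exact_mod_cast hn)
    have hz : g n f = 0 := by
      simp only [hgdef, ContinuousMap.coe_mk]
      have h1 : |evalCLM (x n) (W2C f)| - (n : ℝ) ≤ 0 := by linarith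
      have h2 : min 1 (|evalCLM (x n) (W2C f)| - (n : ℝ)) ≤ 0 :=
        le_trans (min_le_right _ _) h1
      exact max_eq_left h2
    simp [hz, hε]
  have hS : IsCompact (insert (0 : C(WeakSpace ℝ C(X, ℝ), ℝ)) (Set.range g)) :=
    hg0.isCompact_insert_range
  have hEq := h _ hS
  have hEA := hEq (0 : WeakSpace ℝ C(X, ℝ))
  have hU := hEA _ (Metric.dist_mem_uniformity (by norm_num : (0 : ℝ) < 1 / 2))
  -- hU : ∀ᶠ f in 𝓝 0, ∀ gg : ↥S, (gg 0, gg f) ∈ {p | dist p.1 p.2 < 1/2}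
  obtain ⟨s, ε, hε, hsub⟩ := weak_nhds_zero hU
  obtain ⟨n, hn⟩ := exists_eval_not_mem_span x hx s
  obtain ⟨f₀, hker, hne⟩ := exists_mem_ker_ne_zero s _ hn
  have hne' : (f₀ : C(X, ℝ)) (x n) ≠ 0 := hne
  set c : ℝ := ((n : ℝ) + 1) / (f₀ (x n)) with hc
  set f₁ : WeakSpace ℝ C(X, ℝ) := toWeakSpace ℝ C(X, ℝ) (c • f₀) with hf₁
  have hW2C : W2C f₁ = c • f₀ := rfl
  have hval : (W2C f₁) (x n) = (n : ℝ) + 1 := by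
    rw [hW2C]
    show c * f₀ (x n) = (n : ℝ) + 1
    rw [hc, div_mul_cancel₀ _ hne']
  have hmem : f₁ ∈ {f : WeakSpace ℝ C(X, ℝ) |
      ∀ μ ∈ s, |(topDualPairing ℝ C(X, ℝ)).flip f μ| < ε} := by
    intro μ hμ
    have : (topDualPairing ℝ C(X, ℝ)).flip f₁ μ = μ (c • f₀) := rfl
    rw [this, map_smul]
    have := hker μ hμ
    simp [this, hε]
  have hf₁V := hsub hmem
  have hgnS : (g n) ∈ insert (0 : C(WeakSpace ℝ C(X, ℝ), ℝ)) (Set.range g) :=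
    Set.mem_insert_iff.mpr (Or.inr ⟨n, rfl⟩)
  have hdist := hf₁V ⟨g n, hgnS⟩
  -- compute the two values
  have hv0 : (g n) (0 : WeakSpace ℝ C(X, ℝ)) = 0 := by
    simp only [hgdef, ContinuousMap.coe_mk]
    have : evalCLM (x n) (W2C (0 : WeakSpace ℝ C(X, ℝ))) = 0 := by
      show evalCLM (x n) (0 : C(X, ℝ)) = 0
      simp
    rw [this]
    have h2 : min 1 (|(0 : ℝ)| - (n : ℝ)) ≤ 0 := by
      refine le_trans (min_le_right _ _) ?_
      simp
    exact max_eq_left h2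
  have hv1 : (g n) f₁ = 1 := by
    simp only [hgdef, ContinuousMap.coe_mk]
    have : evalCLM (x n) (W2C f₁) = (n : ℝ) + 1 := hval
    rw [this]
    have : |(n : ℝ) + 1| = (n : ℝ) + 1 := abs_of_pos (by positivity)
    rw [this]
    norm_num
  have hdist' : dist ((g n) (0 : WeakSpace ℝ C(X, ℝ))) ((g n) f₁) < 1 / 2 := hdist
  rw [hv0, hv1, Real.dist_eq] at hdist'
  norm_num at hdist'

end Tychonoff

section Part2

variable {X : Type*} [TopologicalSpace X] [CompletelyRegularSpace X] [T2Space X]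

/-- the identity as a linear map `Cp X →ₗ C(X,ℝ)` -/
def toCMlm : Cp X →ₗ[ℝ] C(X, ℝ) where
  toFun f := f.toCM
  map_add' _ _ := rfl
  map_smul' _ _ := rfl

/-- If `C_p(X)` is barrelled, every compact subset of `X` is finite. -/
lemma compact_finite_of_barrelled_cp [BarrelledSpace ℝ (Cp X)]
    {K : Set X} (hK : IsCompact K) : K.Finite := by
  haveI : CompactSpace K := isCompact_iff_compactSpace.mp hK
  set q : Seminorm ℝ (Cp X) :=
    (normSeminorm ℝ C(K, ℝ)).comp (((restrCLM K) : C(X, ℝ) →ₗ[ℝ] C(K, ℝ)) ∘ₗ toCMlm) with hq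
  have hqval : ∀ f : Cp X, q f = ‖(f.toCM).restrict K‖ := fun f => rfl
  have hlsc : LowerSemicontinuous fun f : Cp X => q f := by
    intro f₀ y hy
    rcases lt_or_ge y 0 with h0 | h0
    · exact Filter.Eventually.of_forall fun f => lt_of_lt_of_le h0 (apply_nonneg q f)
    · have hex : ∃ z : K, y < |f₀.toCM z| := by
        by_contra hc
        push_neg at hc
        have hle : ‖(f₀.toCM).restrict K‖ ≤ y :=
          (ContinuousMap.norm_le _ h0).mpr fun z => by
            simpa [Real.norm_eq_abs] using hc z
        exact absurd (show y < ‖(f₀.toCM).restrict K‖ from hy) (not_lt.mpr hle)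
      obtain ⟨z, hz⟩ := hex
      have hcont : Continuous fun f : Cp X => f.toCM (z : X) :=
        (continuous_apply (z : X)).comp continuous_induced_dom
      have hopen : IsOpen {f : Cp X | y < |f.toCM (z : X)|} :=
        isOpen_lt continuous_const hcont.abs
      filter_upwards [hopen.mem_nhds hz] with f hf
      calc y < |f.toCM (z : X)| := hf
        _ ≤ ‖(f.toCM).restrict K‖ := by
            simpa [Real.norm_eq_abs] using
              ContinuousMap.norm_coe_le_norm ((f.toCM).restrict K) z
        _ = q f := (hqval f).symm
  have hcontq : Continuous q := BarrelledSpace.continuous_of_lowerSemicontinuous q hlsc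
  have hnb : {f : Cp X | q f < 1} ∈ 𝓝 (0 : Cp X) := by
    have h0 : q (0 : Cp X) ∈ Set.Iio (1 : ℝ) := by
      simp only [map_zero]
      norm_num
    have := (hcontq.continuousAt (x := (0 : Cp X))).preimage_mem_nhds
      (isOpen_Iio.mem_nhds h0)
    simpa [Set.preimage] using this
  obtain ⟨F, ε, hε, hsub⟩ := mem_induced_pi_nhds
    (φ := fun f : Cp X => (f.toCM : X → ℝ)) hnb
  have hKF : K ⊆ (F : Set X) := by
    intro y hyK
    by_contra hyF
    obtain ⟨f, hfy, hfF⟩ := exists_one_zero F.finite_toSet hyF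
    have hmem : (f : Cp X) ∈ {g : Cp X | ∀ i ∈ F, |(Cp.toCM g : X → ℝ) i -
        (Cp.toCM (0 : Cp X) : X → ℝ) i| < ε} := by
      intro i hi
      have : (Cp.toCM (0 : Cp X) : X → ℝ) i = 0 := rfl
      rw [this]
      have : (Cp.toCM (f : Cp X) : X → ℝ) i = f i := rfl
      rw [this, hfF i hi]
      simpa using hε
    have hq1 : q (f : Cp X) < 1 := hsub hmem
    have hq2 : (1 : ℝ) ≤ q (f : Cp X) := by
      show (1 : ℝ) ≤ ‖(Cp.toCM (f : Cp X)).restrict K‖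
      have := ContinuousMap.norm_coe_le_norm ((Cp.toCM (f : Cp X)).restrict K) ⟨y, hyK⟩
      simp only [Real.norm_eq_abs] at this
      have hval : ((Cp.toCM (f : Cp X)).restrict K) ⟨y, hyK⟩ = f y := rfl
      rw [hval, hfy] at this
      simpa using this
    linarith
  exact F.finite_toSet.subset hKF

/-- If all compact subsets of `X` are finite, the identity from `C_p(X)` to `C_k(X)` is
continuous. -/
lemma continuous_toCM_of_finite (hP : ∀ K : Set X, IsCompact K → K.Finite) :
    Continuous (Cp.toCM : Cp X → C(X, ℝ)) := by
  rw [ContinuousMap.continuous_compactOpen]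
  intro K hK U hU
  have hfin := hP K hK
  have heq : {f : Cp X | MapsTo f.toCM K U} = ⋂ x ∈ K, {f : Cp X | f.toCM x ∈ U} := by
    ext f
    simp [MapsTo]
  rw [heq]
  apply hfin.isOpen_biInter
  intro x _
  have hcont : Continuous fun f : Cp X => f.toCM x :=
    (continuous_apply x).comp continuous_induced_dom
  exact hU.preimage hcont

end Part2

section Maps

variable (X : Type*) [TopologicalSpace X]

/-- identity from `C_k(X)` to `C_p(X)` -/
def ckToCp : C(X, ℝ) → Cp X := fun f => f

/-- identity from the weak space of `C_k(X)` to `C_p(X)` -/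
def wkToCp : WeakSpace ℝ C(X, ℝ) → Cp X := fun f => f

/-- identity from `C_p(X)` to the weak space of `C_k(X)` -/
def cpToWk : Cp X → WeakSpace ℝ C(X, ℝ) := fun f => f

/-- the identity as a linear equivalence `C_k(X) ≃ₗ C_p(X)` -/
noncomputable def ckCpEquiv : C(X, ℝ) ≃ₗ[ℝ] Cp X where
  toFun := ckToCp X
  invFun := Cp.toCM
  map_add' _ _ := rfl
  map_smul' _ _ := rfl
  left_inv _ := rfl
  right_inv _ := rfl

variable {X}

lemma continuous_ckToCp : Continuous (ckToCp X) := by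
  apply continuous_induced_rng.mpr
  exact continuous_coeFun

lemma continuous_wkToCp : Continuous (wkToCp X) := by
  apply continuous_induced_rng.mpr
  apply continuous_pi
  intro x
  exact WeakBilin.eval_continuous _ (evalCLM x)

lemma continuous_cpToWk [CompletelyRegularSpace X] [T2Space X]
    (hP : ∀ K : Set X, IsCompact K → K.Finite) :
    Continuous (cpToWk X) := by
  have h1 : Continuous (Cp.toCM : Cp X → C(X, ℝ)) := continuous_toCM_of_finite hP
  exact (toWeakSpaceCLM ℝ C(X, ℝ)).continuous.comp h1

end Maps

section Transfer

/-- transfer of barrelledness along a linear homeomorphism -/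
lemma barrelled_congr {E F : Type*} [AddCommGroup E] [Module ℝ E] [TopologicalSpace E]
    [AddCommGroup F] [Module ℝ F] [TopologicalSpace F]
    (e : E ≃ₗ[ℝ] F) (hc : Continuous e) (hc' : Continuous e.symm)
    (hE : BarrelledSpace ℝ E) : BarrelledSpace ℝ F := by
  constructor
  intro p hp
  have hq : LowerSemicontinuous fun v : E => p (e v) := by
    intro v y hy
    exact hc.continuousAt.eventually (hp (e v) y hy)
  have hcont : Continuous fun v : E => p (e v) := by
    have := hE.continuous_of_lowerSemicontinuous (p.comp (e : E →ₗ[ℝ] F)) (by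
      exact hq)
    exact this
  have hco : ⇑p = (fun v : E => p (e v)) ∘ e.symm := by
    ext w
    simp
  rw [hco]
  exact hcont.comp hc'

/-- transfer of the Ascoli property along a homeomorphism-like pair -/
lemma isAscoli_congr {Y Z : Type*} [TopologicalSpace Y] [TopologicalSpace Z]
    {e : Y → Z} {e' : Z → Y} (hce : Continuous e) (hce' : Continuous e')
    (hee' : ∀ z, e (e' z) = z) (h : IsAscoli Y) : IsAscoli Z := by
  intro S hS z₀ U hU
  set Φ : C(Z, ℝ) → C(Y, ℝ) := fun g => g.comp ⟨e, hce⟩ with hΦdef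
  have hΦ : Continuous Φ := ContinuousMap.continuous_precomp ⟨e, hce⟩
  have hSY := h (Φ '' S) (hS.image hΦ)
  have h1 := hSY (e' z₀) U hU
  have h2 := (hce'.continuousAt (x := z₀)).eventually h1
  filter_upwards [h2] with z hz
  intro gS
  have := hz ⟨Φ gS.1, mem_image_of_mem _ gS.2⟩
  simpa [hΦdef, hee'] using this

end Transfer


/-- `C_k(X)` is barrelled and weakly Ascoli if and only if `C_p(X)` is barrelled and Ascoli. -/
theorem statement12 {X : Type*} [TopologicalSpace X] [CompletelyRegularSpace X] [T2Space X] :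
    (BarrelledSpace ℝ C(X, ℝ) ∧ IsAscoli (WeakSpace ℝ C(X, ℝ))) ↔
      (BarrelledSpace ℝ (Cp X) ∧ IsAscoli (Cp X)) := by
  constructor
  · rintro ⟨hb, ha⟩
    have hP : ∀ K : Set X, IsCompact K → K.Finite :=
      fun K hK => compact_finite_of_weakAscoli ha hK
    refine ⟨?_, ?_⟩
    · exact barrelled_congr (ckCpEquiv X) (by exact continuous_ckToCp)
        (by exact continuous_toCM_of_finite hP) hb
    · exact isAscoli_congr (e := wkToCp X) (e' := cpToWk X)
        continuous_wkToCp (continuous_cpToWk hP) (fun _ => rfl) ha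
  · rintro ⟨hb, ha⟩
    haveI := hb
    have hP : ∀ K : Set X, IsCompact K → K.Finite :=
      fun K hK => compact_finite_of_barrelled_cp hK
    refine ⟨?_, ?_⟩
    · exact barrelled_congr (ckCpEquiv X).symm (by exact continuous_toCM_of_finite hP)
        (by exact continuous_ckToCp) hb
    · exact isAscoli_congr (e := cpToWk X) (e' := wkToCp X)
        (continuous_cpToWk hP) continuous_wkToCp (fun _ => rfl) ha
end
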